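/- arXiv:1511.08054 — 2 statements merged into one kernel-verified Lean document; each statement's English description precedes it below -/
import Mathlib

section
/- Let G be a 2-connected graph with distinct vertices u, v such that every vertex of G other than u and v has degree at least 3. Then G has a (K_4 − e) minor in which u and v are mapped to the two endpoints of the missing edge e; equivalently, G + uv has a K_4 minor with u and v in distinct branch sets. -/
/-- `G` is 2-connected: at least 3 vertices, connected, and still connected
after deleting any single vertex. -/
def IsTwoConnected {V : Type*} [Fintype V] (G : SimpleGraph V) : Prop :=
  3 ≤ Fintype.card V ∧ G.Connected ∧
    ∀ v : V, (G.induce ({v}ᶜ : Set V)).Connected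


open Relation Set

namespace K4ME

variable {V : Type*} {W : Type*}

/-- Reachability within a set `S` of vertices. -/
def reachIn (G : SimpleGraph V) (S : Set V) (x y : V) : Prop :=
  x ∈ S ∧ y ∈ S ∧ Relation.ReflTransGen (fun a b => a ∈ S ∧ b ∈ S ∧ G.Adj a b) x y

namespace reachIn

variable {G G' : SimpleGraph V} {S T : Set V} {x y z : V}

theorem refl (hx : x ∈ S) : reachIn G S x x := ⟨hx, hx, .refl⟩

theorem mem_left (h : reachIn G S x y) : x ∈ S := h.1
theorem mem_right (h : reachIn G S x y) : y ∈ S := h.2.1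

theorem trans (h : reachIn G S x y) (h' : reachIn G S y z) : reachIn G S x z :=
  ⟨h.1, h'.2.1, h.2.2.trans h'.2.2⟩

theorem tail (h : reachIn G S x y) (hz : z ∈ S) (ha : G.Adj y z) : reachIn G S x z :=
  ⟨h.1, hz, h.2.2.tail ⟨h.2.1, hz, ha⟩⟩

theorem single (hx : x ∈ S) (hy : y ∈ S) (ha : G.Adj x y) : reachIn G S x y :=
  (refl hx).tail hy ha

theorem symm (h : reachIn G S x y) : reachIn G S y x :=
  ⟨h.2.1, h.1, (by
    haveI : Std.Symm (fun a b : V => a ∈ S ∧ b ∈ S ∧ G.Adj a b) :=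
      ⟨fun a b hab => ⟨hab.2.1, hab.1, hab.2.2.symm⟩⟩
    exact Relation.ReflTransGen.stdSymm.symm _ _ h.2.2)⟩

theorem mono_set (hST : S ⊆ T) (h : reachIn G S x y) : reachIn G T x y := by
  refine ⟨hST h.1, hST h.2.1, ?_⟩
  exact Relation.ReflTransGen.mono (fun a b hab => ⟨hST hab.1, hST hab.2.1, hab.2.2⟩) _ _ h.2.2

theorem mono_graph (hG : ∀ a b, a ∈ S → b ∈ S → G.Adj a b → G'.Adj a b)
    (h : reachIn G S x y) : reachIn G' S x y := by
  refine ⟨h.1, h.2.1, ?_⟩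
  exact Relation.ReflTransGen.mono (fun a b hab => ⟨hab.1, hab.2.1, hG _ _ hab.1 hab.2.1 hab.2.2⟩) _ _ h.2.2

/-- Walk from `x`; either we can stay in `S \ T` all the way to `y`, or we reach a last
vertex `b` in `S \ T` adjacent to some `t ∈ T ∩ S`. -/
theorem split (h : reachIn G S x y) (hx : x ∉ T) :
    reachIn G (S \ T) x y ∨
      ∃ t ∈ T, t ∈ S ∧ ∃ b, reachIn G (S \ T) x b ∧ G.Adj b t := by
  obtain ⟨hxS, -, hr⟩ := h
  induction hr with
  | refl => exact Or.inl (refl ⟨hxS, hx⟩)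
  | @tail b c hxb hbc ih =>
    rcases ih with ih | ih
    · by_cases hcT : c ∈ T
      · exact Or.inr ⟨c, hcT, hbc.2.1, b, ih, hbc.2.2⟩
      · exact Or.inl (ih.tail ⟨hbc.2.1, hcT⟩ hbc.2.2)
    · exact Or.inr ih

/-- If `x ≠ y` are connected in `S`, there is an edge at `x` inside `S`. -/
theorem exists_adj (h : reachIn G S x y) (hxy : x ≠ y) :
    ∃ z ∈ S, G.Adj x z := by
  obtain ⟨-, -, hr⟩ := h
  revert hxy
  induction hr with
  | refl => exact fun hxy => absurd rfl hxy
  | @tail b c hxb hbc ih =>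
    intro _
    by_cases hxb' : x = b
    · exact ⟨c, hbc.2.1, hxb' ▸ hbc.2.2⟩
    · exact ih hxb'

end reachIn

/-- Connectivity of a set of vertices (without nonemptiness). -/
def SetConn (G : SimpleGraph V) (S : Set V) : Prop :=
  ∀ x ∈ S, ∀ y ∈ S, reachIn G S x y

theorem SetConn.mono_graph {G G' : SimpleGraph V} {S : Set V}
    (hG : ∀ a b, a ∈ S → b ∈ S → G.Adj a b → G'.Adj a b) (h : SetConn G S) : SetConn G' S :=
  fun x hx y hy => (h x hx y hy).mono_graph hG

theorem SetConn.union {G : SimpleGraph V} {S T : Set V} (hS : SetConn G S) (hT : SetConn G T)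
    (hst : (S ∩ T).Nonempty) : SetConn G (S ∪ T) := by
  obtain ⟨p, hpS, hpT⟩ := hst
  have key : ∀ x ∈ S ∪ T, reachIn G (S ∪ T) x p := by
    rintro x (hx | hx)
    · exact (hS x hx p hpS).mono_set subset_union_left
    · exact (hT x hx p hpT).mono_set subset_union_right
  exact fun x hx y hy => (key x hx).trans (key y hy).symm

theorem SetConn.union_adj {G : SimpleGraph V} {S T : Set V} (hS : SetConn G S) (hT : SetConn G T)
    {a b : V} (ha : a ∈ S) (hb : b ∈ T) (hab : G.Adj a b) : SetConn G (S ∪ T) := by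
  have key : ∀ x ∈ S ∪ T, reachIn G (S ∪ T) x a := by
    rintro x (hx | hx)
    · exact (hS x hx a ha).mono_set subset_union_left
    · exact ((hT x hx b hb).mono_set subset_union_right).tail (Or.inl ha) hab.symm
  exact fun x hx y hy => (key x hx).trans (key y hy).symm

theorem SetConn.singleton {G : SimpleGraph V} (x : V) : SetConn G {x} := by
  rintro a rfl b rfl
  exact reachIn.refl rfl

/-- The connected component of `x` inside `S`. -/
def compIn (G : SimpleGraph V) (S : Set V) (x : V) : Set V := {y | reachIn G S x y}

theorem compIn_subset {G : SimpleGraph V} {S : Set V} {x : V} : compIn G S x ⊆ S :=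
  fun _ h => h.mem_right

theorem mem_compIn_self {G : SimpleGraph V} {S : Set V} {x : V} (hx : x ∈ S) :
    x ∈ compIn G S x := reachIn.refl hx

theorem compIn_conn {G : SimpleGraph V} {S : Set V} {x : V} : SetConn G (compIn G S x) := by
  have key : ∀ y, reachIn G S x y → reachIn G (compIn G S x) x y := by
    intro y h
    obtain ⟨hxS, -, hr⟩ := h
    induction hr with
    | refl => exact reachIn.refl (mem_compIn_self hxS)
    | @tail b c hxb hbc ih =>
      have hxb' : reachIn G S x b := ⟨hxS, hbc.1, hxb⟩
      exact ih.tail (hxb'.tail hbc.2.1 hbc.2.2) hbc.2.2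
  intro a ha b hb
  exact ((key a ha).symm).trans (key b hb)

theorem compIn_closed {G : SimpleGraph V} {S : Set V} {x y z : V} (hy : y ∈ compIn G S x)
    (hz : z ∈ S) (ha : G.Adj y z) : z ∈ compIn G S x := reachIn.tail hy hz ha

theorem subset_compIn {G : SimpleGraph V} {S T : Set V} {x : V} (hx : x ∈ T) (hTS : T ⊆ S)
    (hT : SetConn G T) : T ⊆ compIn G S x :=
  fun y hy => (hT x hx y hy).mono_set hTS



/-- Add an edge between `a` and `b` (no-op if `a = b`). -/
def addEdge (G : SimpleGraph V) (a b : V) : SimpleGraph V where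
  Adj x y := G.Adj x y ∨ (x ≠ y ∧ ((x = a ∧ y = b) ∨ (x = b ∧ y = a)))
  symm := by
    constructor
    rintro x y (h | ⟨hne, h | h⟩)
    · exact Or.inl h.symm
    · exact Or.inr ⟨hne.symm, Or.inr ⟨h.2, h.1⟩⟩
    · exact Or.inr ⟨hne.symm, Or.inl ⟨h.2, h.1⟩⟩
  loopless := by
    constructor
    rintro x (h | ⟨hne, -⟩)
    · exact G.loopless.irrefl x h
    · exact hne rfl

theorem addEdge_adj {G : SimpleGraph V} {a b x y : V} :
    (addEdge G a b).Adj x y ↔ G.Adj x y ∨ (x ≠ y ∧ ((x = a ∧ y = b) ∨ (x = b ∧ y = a))) :=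
  Iff.rfl

theorem adj_addEdge_left (G : SimpleGraph V) {a b : V} (hab : a ≠ b) :
    (addEdge G a b).Adj a b := Or.inr ⟨hab, Or.inl ⟨rfl, rfl⟩⟩

theorem addEdge_adj_of_adj {G : SimpleGraph V} (a b : V) {x y : V} (h : G.Adj x y) :
    (addEdge G a b).Adj x y := Or.inl h

/-- Remove the edge between `a` and `b`. -/
def delEdge (G : SimpleGraph V) (a b : V) : SimpleGraph V where
  Adj x y := G.Adj x y ∧ ¬(x = a ∧ y = b) ∧ ¬(x = b ∧ y = a)
  symm := by
    constructor
    rintro x y ⟨h, h1, h2⟩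
    exact ⟨h.symm, fun hc => h2 ⟨hc.2, hc.1⟩, fun hc => h1 ⟨hc.2, hc.1⟩⟩
  loopless := ⟨fun x h => G.loopless.irrefl x h.1⟩

theorem delEdge_adj {G : SimpleGraph V} {a b x y : V} :
    (delEdge G a b).Adj x y ↔ G.Adj x y ∧ ¬(x = a ∧ y = b) ∧ ¬(x = b ∧ y = a) := Iff.rfl

/-- If `S` misses `a` or `b`, removing edge `ab` does not affect reachability in `S`. -/
theorem reachIn_delEdge_of_not_mem {G : SimpleGraph V} {a b : V} {S : Set V} {x y : V}
    (hS : ¬(a ∈ S ∧ b ∈ S)) (h : reachIn G S x y) : reachIn (delEdge G a b) S x y := by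
  refine h.mono_graph fun p q hp hq hpq => ⟨hpq, ?_, ?_⟩
  · rintro ⟨rfl, rfl⟩; exact hS ⟨hp, hq⟩
  · rintro ⟨rfl, rfl⟩; exact hS ⟨hq, hp⟩

/-- Eliminating an added edge when the set misses one of the endpoints. -/
theorem reachIn_of_addEdge {G : SimpleGraph V} {a b : V} {S : Set V} {x y : V}
    (hS : ¬(a ∈ S ∧ b ∈ S)) (h : reachIn (addEdge G a b) S x y) : reachIn G S x y := by
  refine h.mono_graph fun p q hp hq hpq => ?_
  rcases hpq with hpq | ⟨-, ⟨rfl, rfl⟩ | ⟨rfl, rfl⟩⟩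
  · exact hpq
  · exact absurd ⟨hp, hq⟩ hS
  · exact absurd ⟨hq, hp⟩ hS

/-- Reroute a walk around a vertex `v` all of whose neighbors in `S` are among `{p, q}`. -/
theorem reachIn_reroute {G : SimpleGraph V} {S : Set V} {v p q x y : V}
    (h : reachIn G S x y) (hx : x ≠ v) (hy : y ≠ v)
    (hnbr : ∀ z ∈ S, G.Adj v z → z = p ∨ z = q) :
    reachIn (addEdge G p q) (S \ {v}) x y := by
  obtain ⟨hxS, hyS, hr⟩ := h
  have main : ∀ c, Relation.ReflTransGen (fun a b => a ∈ S ∧ b ∈ S ∧ G.Adj a b) x c →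
      (c ≠ v ∧ reachIn (addEdge G p q) (S \ {v}) x c) ∨
      (c = v ∧ ∃ w ∈ S, w ≠ v ∧ G.Adj v w ∧ reachIn (addEdge G p q) (S \ {v}) x w) := by
    intro c hc
    induction hc with
    | refl => exact Or.inl ⟨hx, reachIn.refl ⟨hxS, hx⟩⟩
    | @tail b c hxb hbc ih =>
      rcases ih with ⟨hbv, hR⟩ | ⟨hbv2, w, hwS, hwv, hwadj, hR⟩
      · by_cases hcv : c = v
        · subst hcv
          exact Or.inr ⟨rfl, b, hbc.1, hbv, hbc.2.2.symm, hR⟩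
        · exact Or.inl ⟨hcv, hR.tail ⟨hbc.2.1, hcv⟩ (addEdge_adj_of_adj p q hbc.2.2)⟩
      · -- b = v; c is a neighbor of v
        have hadj : G.Adj v c := hbv2 ▸ hbc.2.2
        have hcv : c ≠ v := fun hc => G.loopless.irrefl v (hc ▸ hadj)
        refine Or.inl ⟨hcv, ?_⟩
        by_cases hwc : w = c
        · exact hwc ▸ hR
        · have hw' := hnbr w hwS hwadj
          have hc' := hnbr c hbc.2.1 hadj
          refine hR.tail ⟨hbc.2.1, hcv⟩ (Or.inr ⟨hwc, ?_⟩)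
          rcases hw' with rfl | rfl
          · rcases hc' with rfl | rfl
            · exact absurd rfl hwc
            · exact Or.inl ⟨rfl, rfl⟩
          · rcases hc' with rfl | rfl
            · exact Or.inr ⟨rfl, rfl⟩
            · exact absurd rfl hwc
  rcases main y hr with ⟨-, hR⟩ | ⟨rfl, -⟩
  · exact hR
  · exact absurd rfl hy


/-! ### Transfer between induced subgraphs and ambient graph -/

theorem reachIn_induce_iff {GG : SimpleGraph V} {S' : Set V} {T : Set ↥S'} {x y : ↥S'} :
    reachIn (GG.induce S') T x y ↔ reachIn GG (Subtype.val '' T) ↑x ↑y := by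
  constructor
  · rintro ⟨hx, hy, hr⟩
    refine ⟨Set.mem_image_of_mem _ hx, Set.mem_image_of_mem _ hy, ?_⟩
    exact Relation.ReflTransGen.lift Subtype.val
      (fun a b hab => ⟨Set.mem_image_of_mem _ hab.1, Set.mem_image_of_mem _ hab.2.1, hab.2.2⟩) _ _ hr
  · rintro ⟨hx, hy, hr⟩
    have hxT : x ∈ T := by
      obtain ⟨x0, hx0, hval⟩ := hx
      rwa [← Subtype.val_injective hval]
    have main : ∀ c, Relation.ReflTransGen
        (fun a b => a ∈ Subtype.val '' T ∧ b ∈ Subtype.val '' T ∧ GG.Adj a b) (↑x) c →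
        ∃ c' : ↥S', ↑c' = c ∧ c' ∈ T ∧
          Relation.ReflTransGen (fun a b => a ∈ T ∧ b ∈ T ∧ (GG.induce S').Adj a b) x c' := by
      intro c hc
      induction hc with
      | refl => exact ⟨x, rfl, hxT, .refl⟩
      | @tail b c hxb hbc ih =>
        obtain ⟨b', rfl, hb'T, hb'r⟩ := ih
        obtain ⟨c', hc'T, rfl⟩ := hbc.2.1
        exact ⟨c', rfl, hc'T, hb'r.tail ⟨hb'T, hc'T, hbc.2.2⟩⟩
    obtain ⟨y', hy', hy'T, hy'r⟩ := main _ hr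
    have : y' = y := Subtype.val_injective hy'
    subst this
    exact ⟨hxT, hy'T, hy'r⟩

theorem induce_connected_iff {G : SimpleGraph V} {S : Set V} :
    (G.induce S).Connected ↔ S.Nonempty ∧ SetConn G S := by
  rw [SimpleGraph.connected_iff]
  constructor
  · rintro ⟨hp, ⟨x⟩⟩
    refine ⟨⟨x, x.2⟩, fun a ha b hb => ?_⟩
    have := (SimpleGraph.reachable_iff_reflTransGen _ _).1 (hp ⟨a, ha⟩ ⟨b, hb⟩)
    have h2 : reachIn (G.induce S) (Set.univ : Set ↥S) ⟨a, ha⟩ ⟨b, hb⟩ := by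
      refine ⟨trivial, trivial, Relation.ReflTransGen.mono ?_ _ _ this⟩
      exact fun p q hpq => ⟨trivial, trivial, hpq⟩
    have h3 := reachIn_induce_iff.1 h2
    rwa [Subtype.coe_image_univ] at h3
  · rintro ⟨⟨x, hx⟩, hconn⟩
    refine ⟨fun a b => ?_, ⟨⟨x, hx⟩⟩⟩
    have h1 : reachIn G (Subtype.val '' (Set.univ : Set ↥S)) ↑a ↑b := by
      rw [Subtype.coe_image_univ]; exact hconn a a.2 b b.2
    have h2 := reachIn_induce_iff.2 h1
    rw [SimpleGraph.reachable_iff_reflTransGen]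
    exact Relation.ReflTransGen.mono (fun p q hpq => hpq.2.2) _ _ h2.2.2

theorem ncard_neighborSet_induce {G : SimpleGraph V} {S' : Set V} {w : ↥S'}
    (h : G.neighborSet ↑w ⊆ S') :
    ((G.induce S').neighborSet w).ncard = (G.neighborSet (↑w : V)).ncard := by
  have himg : Subtype.val '' ((G.induce S').neighborSet w) = G.neighborSet (↑w : V) := by
    ext z
    constructor
    · rintro ⟨z', hz', rfl⟩; exact hz'
    · intro hz
      exact ⟨⟨z, h hz⟩, hz, rfl⟩
  rw [← himg, Set.ncard_image_of_injective _ Subtype.val_injective]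

theorem neighborSet_addEdge {G : SimpleGraph V} {a b w : V} (hwa : w ≠ a) (hwb : w ≠ b) :
    (addEdge G a b).neighborSet w = G.neighborSet w := by
  ext z
  simp only [SimpleGraph.mem_neighborSet, addEdge_adj]
  constructor
  · rintro (h | ⟨-, ⟨h1, -⟩ | ⟨h1, -⟩⟩)
    · exact h
    · exact absurd h1 hwa
    · exact absurd h1 hwb
  · exact Or.inl

/-! ### Cardinality helpers -/

theorem three_le_ncard {S : Set V} (a b c : V) (ha : a ∈ S) (hb : b ∈ S) (hc : c ∈ S)
    (hab : a ≠ b) (hac : a ≠ c) (hbc : b ≠ c) (hfin : S.Finite) : 3 ≤ S.ncard := by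
  have h1 : ({a, b, c} : Set V) ⊆ S := by
    rintro x (rfl | rfl | rfl) <;> assumption
  have h2 : ({a, b, c} : Set V).ncard = 3 :=
    Set.ncard_eq_three.2 ⟨a, b, c, hab, hac, hbc, rfl⟩
  calc 3 = ({a, b, c} : Set V).ncard := h2.symm
    _ ≤ S.ncard := Set.ncard_le_ncard h1 hfin

theorem nat_card_subtype_lt [Finite V] {S : Set V} {x : V} (hx : x ∉ S) :
    Nat.card ↥S < Nat.card V := by
  rw [Nat.card_coe_set_eq, ← Set.ncard_univ]
  exact Set.ncard_lt_ncard ⟨Set.subset_univ S, fun h => hx (h (Set.mem_univ x))⟩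
    (Set.finite_univ)

theorem three_le_nat_card {S : Set V} [Finite V] (a b c : ↥S)
    (hab : a ≠ b) (hac : a ≠ c) (hbc : b ≠ c) : 3 ≤ Nat.card ↥S := by
  rw [Nat.card_coe_set_eq]
  exact three_le_ncard ↑a ↑b ↑c a.2 b.2 c.2 (fun h => hab (Subtype.val_injective h))
    (fun h => hac (Subtype.val_injective h)) (fun h => hbc (Subtype.val_injective h))
    (Set.toFinite S)

/-! ### Edge set cardinality -/

theorem edgeSet_delEdge {G : SimpleGraph V} {a b : V} :
    (delEdge G a b).edgeSet = G.edgeSet \ {s(a, b)} := by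
  ext e
  induction e with
  | _ x y =>
    simp only [SimpleGraph.mem_edgeSet, Set.mem_diff, Set.mem_singleton_iff, delEdge_adj,
      Sym2.eq_iff]
    tauto

theorem ncard_edgeSet_delEdge_lt [Finite V] {G : SimpleGraph V} {a b : V} (hab : G.Adj a b) :
    (delEdge G a b).edgeSet.ncard < G.edgeSet.ncard := by
  rw [edgeSet_delEdge]
  exact Set.ncard_diff_singleton_lt_of_mem hab (Set.toFinite _)

theorem ncard_edgeSet_induce_le [Finite V] (G : SimpleGraph V) (S : Set V) :
    (G.induce S).edgeSet.ncard ≤ G.edgeSet.ncard := by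
  have h : Sym2.map (Subtype.val : ↥S → V) '' (G.induce S).edgeSet ⊆ G.edgeSet := by
    rintro e ⟨e', he', rfl⟩
    induction e' with
    | _ x y => exact he'
  calc (G.induce S).edgeSet.ncard
      = (Sym2.map (Subtype.val : ↥S → V) '' (G.induce S).edgeSet).ncard :=
        (Set.ncard_image_of_injective _ (Sym2.map.injective Subtype.val_injective)).symm
    _ ≤ G.edgeSet.ncard := Set.ncard_le_ncard h (Set.toFinite _)


theorem image_val_preimage {S' : Set V} {Q : Set V} (hQ : Q ⊆ S') :
    Subtype.val '' {z : ↥S' | ↑z ∈ Q} = Q := by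
  ext z
  constructor
  · rintro ⟨z', hz', rfl⟩; exact hz'
  · intro hz; exact ⟨⟨z, hQ hz⟩, hz, rfl⟩

theorem setConn_image_val {H : SimpleGraph V} {S' : Set V} {T : Set ↥S'}
    (h : SetConn (H.induce S') T) : SetConn H (Subtype.val '' T) := by
  rintro x ⟨x', hx', rfl⟩ y ⟨y', hy', rfl⟩
  exact reachIn_induce_iff.1 (h x' hx' y' hy')

theorem setConn_preimage {H : SimpleGraph V} {S' : Set V} {Q : Set V} (hQ : Q ⊆ S')
    (h : SetConn H Q) : SetConn (H.induce S') {z : ↥S' | ↑z ∈ Q} := by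
  intro x hx y hy
  rw [reachIn_induce_iff, image_val_preimage hQ]
  exact h ↑x hx ↑y hy

/-- A set realizing a connection between `A` and `B`. -/
def MengerConn (H : SimpleGraph V) (A B S : Set V) : Prop :=
  SetConn H S ∧ (S ∩ A).Nonempty ∧ (S ∩ B).Nonempty

theorem MengerConn.mono_graph {H H' : SimpleGraph V} {A B S : Set V}
    (hG : ∀ a b, a ∈ S → b ∈ S → H.Adj a b → H'.Adj a b) (h : MengerConn H A B S) :
    MengerConn H' A B S := ⟨h.1.mono_graph hG, h.2⟩


theorem compl_diff_compl_eq (S' : Set V) (p : V) :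
    ({p}ᶜ : Set V) \ S'ᶜ = S' \ {p} := by
  ext t
  constructor
  · rintro ⟨h1, h2⟩
    exact ⟨not_not.1 h2, h1⟩
  · rintro ⟨h1, h2⟩
    exact ⟨h2, fun hh => hh h1⟩

theorem build_disjoint {B : Fin 4 → Set V} (d01 : Disjoint (B 0) (B 1))
    (d02 : Disjoint (B 0) (B 2)) (d03 : Disjoint (B 0) (B 3)) (d12 : Disjoint (B 1) (B 2))
    (d13 : Disjoint (B 1) (B 3)) (d23 : Disjoint (B 2) (B 3)) :
    Pairwise fun i j => Disjoint (B i) (B j) := by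
  intro i j hij
  fin_cases i <;> fin_cases j <;>
    first
      | exact d01
      | exact d01.symm
      | exact d02
      | exact d02.symm
      | exact d03
      | exact d03.symm
      | exact d12
      | exact d12.symm
      | exact d13
      | exact d13.symm
      | exact d23
      | exact d23.symm
      | exact absurd (by decide) hij

universe u

/-- Set version of Menger's theorem for `k = 2`: either there are two disjoint connected
sets each meeting `A` and `B`, or a single vertex meets every such connected set. -/
theorem menger2 (n : ℕ) : ∀ (V : Type u) [Finite V] (H : SimpleGraph V)
    (A B : Set V), Nat.card V + H.edgeSet.ncard ≤ n → Nonempty V →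
    (∃ S T : Set V, MengerConn H A B S ∧ MengerConn H A B T ∧ Disjoint S T) ∨
    (∃ c : V, ∀ S : Set V, MengerConn H A B S → c ∈ S) := by
  induction n using Nat.strong_induction_on with
  | _ n IH =>
  intro V _ H A B hn hne
  classical
  -- Case: two common elements of A and B
  by_cases h2 : ∃ z w : V, z ∈ A ∩ B ∧ w ∈ A ∩ B ∧ z ≠ w
  · obtain ⟨z, w, hz, hw, hzw⟩ := h2
    refine Or.inl ⟨{z}, {w}, ?_, ?_, ?_⟩
    · exact ⟨SetConn.singleton z, ⟨z, rfl, hz.1⟩, ⟨z, rfl, hz.2⟩⟩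
    · exact ⟨SetConn.singleton w, ⟨w, rfl, hw.1⟩, ⟨w, rfl, hw.2⟩⟩
    · exact Set.disjoint_singleton.2 hzw
  -- Case: exactly one common element
  by_cases h1 : ∃ z : V, z ∈ A ∩ B
  · obtain ⟨z, hz⟩ := h1
    by_cases hall : ∀ S : Set V, MengerConn H A B S → z ∈ S
    · exact Or.inr ⟨z, hall⟩
    · push_neg at hall
      obtain ⟨S₀, hS₀, hzS₀⟩ := hall
      refine Or.inl ⟨{z}, S₀, ⟨SetConn.singleton z, ⟨z, rfl, hz.1⟩, ⟨z, rfl, hz.2⟩⟩, hS₀, ?_⟩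
      exact Set.disjoint_singleton_left.2 hzS₀
  have hAB : ∀ z, z ∈ A → z ∈ B → False := fun z ha hb => h1 ⟨z, ha, hb⟩
  -- Case: A (or B) essentially a singleton
  by_cases hA1 : ∃ a, A ⊆ {a}
  · obtain ⟨a, ha⟩ := hA1
    refine Or.inr ⟨a, fun S hS => ?_⟩
    obtain ⟨a', ha'S, ha'A⟩ := hS.2.1
    have h := ha ha'A
    rw [Set.mem_singleton_iff] at h
    rwa [← h]
  by_cases hB1 : ∃ b, B ⊆ {b}
  · obtain ⟨b, hb⟩ := hB1
    refine Or.inr ⟨b, fun S hS => ?_⟩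
    obtain ⟨b', hb'S, hb'B⟩ := hS.2.2
    have h := hb hb'B
    rw [Set.mem_singleton_iff] at h
    rwa [← h]
  -- Case: no edges at all
  by_cases hE : H.edgeSet = ∅
  · refine Or.inr ⟨hne.some, fun S hS => ?_⟩
    exfalso
    obtain ⟨a, haS, haA⟩ := hS.2.1
    obtain ⟨b, hbS, hbB⟩ := hS.2.2
    have hab : a ≠ b := fun h => hAB a haA (h ▸ hbB)
    obtain ⟨z, hzS, hz⟩ := (hS.1 a haS b hbS).exists_adj hab
    exact Set.eq_empty_iff_forall_notMem.1 hE _ ((H.mem_edgeSet).2 hz)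
  -- get an edge (x, y)
  obtain ⟨e, he⟩ := Set.nonempty_iff_ne_empty.2 hE
  obtain ⟨x, y, hxy⟩ : ∃ x y, H.Adj x y := by
    induction e with
    | _ x y => exact ⟨x, y, he⟩
  -- delete the edge and recurse
  have hdel := IH (Nat.card V + (delEdge H x y).edgeSet.ncard)
      (by have := ncard_edgeSet_delEdge_lt (G := H) hxy; omega)
      V (delEdge H x y) A B le_rfl hne
  rcases hdel with ⟨S, T, hS, hT, hd⟩ | ⟨c, hc⟩
  · exact Or.inl ⟨S, T, hS.mono_graph (fun a b _ _ (h : (delEdge H x y).Adj a b) => h.1),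
      hT.mono_graph (fun a b _ _ (h : (delEdge H x y).Adj a b) => h.1), hd⟩
  -- c hits every A-B set not using both x and y
  have sep : ∀ S, MengerConn H A B S → ¬(x ∈ S ∧ y ∈ S) → c ∈ S := by
    intro S hS hnot
    exact hc S ⟨fun a ha b hb => reachIn_delEdge_of_not_mem hnot (hS.1 a ha b hb), hS.2⟩
  by_cases hcx : c = x
  · subst hcx
    refine Or.inr ⟨c, fun S hS => ?_⟩
    by_contra hcS
    exact hcS (sep S hS fun h => hcS h.1)
  by_cases hcy : c = y
  · subst hcy
    refine Or.inr ⟨c, fun S hS => ?_⟩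
    by_contra hcS
    exact hcS (sep S hS fun h => hcS h.2)
  -- choose q ∈ {x, y} such that A and B are not inside {c, q}
  have hq : ∃ q, (q = x ∨ q = y) ∧ ¬(A ⊆ {c, q}) ∧ ¬(B ⊆ {c, q}) := by
    by_contra hcon
    have hcases : ∀ q, (q = x ∨ q = y) → A ⊆ {c, q} ∨ B ⊆ {c, q} := by
      intro q hq'
      by_contra hno
      push_neg at hno
      exact hcon ⟨q, hq', hno.1, hno.2⟩
    have hmem : ∀ (X : Set V) q, (¬∃ a, X ⊆ {a}) → X ⊆ {c, q} → c ∈ X := by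
      intro X q hX hsub
      by_contra hcX
      refine hX ⟨q, fun z hz => ?_⟩
      rcases hsub hz with rfl | hzq
      · exact absurd hz hcX
      · exact hzq
    rcases hcases x (Or.inl rfl) with hAx | hBx <;>
      rcases hcases y (Or.inr rfl) with hAy | hBy
    · refine hA1 ⟨c, fun z hz => ?_⟩
      rcases hAx hz with rfl | hzx
      · rfl
      · rw [Set.mem_singleton_iff] at hzx
        subst hzx
        rcases hAy hz with h | h
        · exact absurd h.symm hcx
        · rw [Set.mem_singleton_iff] at h
          exact absurd h hxy.ne
    · exact absurd (hAB c (hmem A x hA1 hAx) (hmem B y hB1 hBy)) not_false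
    · exact absurd (hAB c (hmem A y hA1 hAy) (hmem B x hB1 hBx)) not_false
    · refine hB1 ⟨c, fun z hz => ?_⟩
      rcases hBx hz with rfl | hzx
      · rfl
      · rw [Set.mem_singleton_iff] at hzx
        subst hzx
        rcases hBy hz with h | h
        · exact absurd h.symm hcx
        · rw [Set.mem_singleton_iff] at h
          exact absurd h hxy.ne
  obtain ⟨q, hqxy, hAq, hBq⟩ := hq
  have hcq : c ≠ q := by rcases hqxy with rfl | rfl; exacts [hcx, hcy]
  set P : Set V := {c, q} with hPdef
  have hsepP : ∀ S, MengerConn H A B S → (S ∩ P).Nonempty := by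
    intro S hS
    by_contra hno
    have hcS : c ∉ S := fun h => hno ⟨c, h, Or.inl rfl⟩
    have hqS : q ∉ S := fun h => hno ⟨q, h, Or.inr rfl⟩
    refine hcS (sep S hS ?_)
    rcases hqxy with rfl | rfl
    · exact fun h => hqS h.1
    · exact fun h => hqS h.2
  -- the two sides of the separator P
  set RA : Set V := {z | ∃ a, (a ∈ A ∧ a ∉ P) ∧ z ∈ compIn H Pᶜ a} with hRAdef
  set RB : Set V := {z | ∃ b, (b ∈ B ∧ b ∉ P) ∧ z ∈ compIn H Pᶜ b} with hRBdef
  have hcompM : ∀ a b, a ∈ A → a ∉ P → b ∈ B → b ∈ compIn H Pᶜ a → False := by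
    intro a b haA haP hbB hba
    have hM : MengerConn H A B (compIn H Pᶜ a) :=
      ⟨compIn_conn, ⟨a, mem_compIn_self haP, haA⟩, ⟨b, hba, hbB⟩⟩
    obtain ⟨t, htS, htP⟩ := hsepP _ hM
    exact (compIn_subset htS) htP
  have hdisjR : ∀ z, z ∈ RA → z ∈ RB → False := by
    rintro z ⟨a, ⟨haA, haP⟩, hza⟩ ⟨b, ⟨hbB, hbP⟩, hzb⟩
    exact hcompM a b haA haP hbB (hza.trans hzb.symm)
  have hRAP : ∀ z, z ∈ RA → z ∉ P := by
    rintro z ⟨a, -, hza⟩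
    exact compIn_subset hza
  have hRBP : ∀ z, z ∈ RB → z ∉ P := by
    rintro z ⟨b, -, hzb⟩
    exact compIn_subset hzb
  have hAsub : A ⊆ RA ∪ P := by
    intro a ha
    by_cases haP : a ∈ P
    · exact Or.inr haP
    · exact Or.inl ⟨a, ⟨ha, haP⟩, mem_compIn_self haP⟩
  have hBsub : B ⊆ RB ∪ P := by
    intro b hb
    by_cases hbP : b ∈ P
    · exact Or.inr hbP
    · exact Or.inl ⟨b, ⟨hb, hbP⟩, mem_compIn_self hbP⟩
  have hBRA : ∀ b, b ∈ B → b ∈ RA → False := by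
    rintro b hbB ⟨a, ⟨haA, haP⟩, hba⟩
    exact hcompM a b haA haP hbB hba
  have hARB : ∀ a, a ∈ A → a ∈ RB → False := by
    rintro a haA ⟨b, ⟨hbB, hbP⟩, hab⟩
    have hM : MengerConn H A B (compIn H Pᶜ b) :=
      ⟨compIn_conn, ⟨a, hab, haA⟩, ⟨b, mem_compIn_self hbP, hbB⟩⟩
    obtain ⟨t, htS, htP⟩ := hsepP _ hM
    exact (compIn_subset htS) htP
  -- generic right-branch lift
  have rightlift : ∀ (X RX : Set V), (∀ z a, a ∈ X → a ∉ P → z ∈ compIn H Pᶜ a → z ∈ RX) →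
      ∀ (cR : ↥(RX ∪ P)),
      (∀ S', MengerConn (H.induce (RX ∪ P)) (Subtype.val ⁻¹' X) (Subtype.val ⁻¹' P) S' →
        cR ∈ S') →
      ∀ S, SetConn H S → (S ∩ X).Nonempty → (S ∩ P).Nonempty → (↑cR : V) ∈ S := by
    intro X RX hclose cR hcR S hSconn hSX hSP
    obtain ⟨a, haS, haX⟩ := hSX
    by_cases haP : a ∈ P
    · have haVR : a ∈ RX ∪ P := Or.inr haP
      have h1 : MengerConn (H.induce (RX ∪ P)) (Subtype.val ⁻¹' X) (Subtype.val ⁻¹' P)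
          {⟨a, haVR⟩} :=
        ⟨SetConn.singleton _, ⟨⟨a, haVR⟩, rfl, haX⟩, ⟨⟨a, haVR⟩, rfl, haP⟩⟩
      have h2 := hcR _ h1
      have h3 : (↑cR : V) = a := congrArg Subtype.val h2
      rw [h3]; exact haS
    · obtain ⟨s₀, hs₀S, hs₀P⟩ := hSP
      rcases (hSconn a haS s₀ hs₀S).split (T := P) haP with
        hleft | ⟨t, htP, htS, b, hreach, hadj⟩
      · exact absurd hleft.mem_right fun h => h.2 hs₀P
      · have hbK : b ∈ compIn H (S \ P) a := hreach
        have hKRX : compIn H (S \ P) a ⊆ RX := fun z hz =>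
          hclose z a haX haP (hz.mono_set fun w hw => hw.2)
        have hQsub : compIn H (S \ P) a ∪ {t} ⊆ RX ∪ P := by
          rintro z (hz | hz)
          · exact Or.inl (hKRX hz)
          · rw [Set.mem_singleton_iff] at hz
            exact Or.inr (hz ▸ htP)
        have hQconn : SetConn H (compIn H (S \ P) a ∪ {t}) :=
          SetConn.union_adj compIn_conn (SetConn.singleton t) hbK rfl hadj
        have hQ' := setConn_preimage hQsub hQconn
        have haK : a ∈ compIn H (S \ P) a ∪ {t} := Or.inl (mem_compIn_self ⟨haS, haP⟩)
        have hM : MengerConn (H.induce (RX ∪ P)) (Subtype.val ⁻¹' X) (Subtype.val ⁻¹' P)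
            {z : ↥(RX ∪ P) | ↑z ∈ compIn H (S \ P) a ∪ {t}} :=
          ⟨hQ', ⟨⟨a, hQsub haK⟩, haK, haX⟩, ⟨⟨t, hQsub (Or.inr rfl)⟩, Or.inr rfl, htP⟩⟩
        have h2 := hcR _ hM
        rcases h2 with h | h
        · exact h.mem_right.1
        · rw [Set.mem_singleton_iff] at h
          rw [h]; exact htS
  -- recursion on the A side
  have hcVA : c ∈ RA ∪ P := Or.inr (Or.inl rfl)
  have hqVA : q ∈ RA ∪ P := Or.inr (Or.inr rfl)
  have hcVB : c ∈ RB ∪ P := Or.inr (Or.inl rfl)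
  have hqVB : q ∈ RB ∪ P := Or.inr (Or.inr rfl)
  obtain ⟨b₀, hb₀B, hb₀P⟩ := Set.not_subset.1 hBq
  obtain ⟨a₀, ha₀A, ha₀P⟩ := Set.not_subset.1 hAq
  have hVA_lt : Nat.card ↥(RA ∪ P) < Nat.card V := by
    refine nat_card_subtype_lt (x := b₀) ?_
    rintro (hb | hb)
    · exact hBRA b₀ hb₀B hb
    · exact hb₀P hb
  have hVB_lt : Nat.card ↥(RB ∪ P) < Nat.card V := by
    refine nat_card_subtype_lt (x := a₀) ?_
    rintro (ha | ha)
    · exact hARB a₀ ha₀A ha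
    · exact ha₀P ha
  have recA := IH (Nat.card ↥(RA ∪ P) + (H.induce (RA ∪ P)).edgeSet.ncard)
      (by have := ncard_edgeSet_induce_le H (RA ∪ P); omega)
      ↥(RA ∪ P) (H.induce (RA ∪ P)) (Subtype.val ⁻¹' A) (Subtype.val ⁻¹' P) le_rfl
      ⟨⟨c, hcVA⟩⟩
  have recB := IH (Nat.card ↥(RB ∪ P) + (H.induce (RB ∪ P)).edgeSet.ncard)
      (by have := ncard_edgeSet_induce_le H (RB ∪ P); omega)
      ↥(RB ∪ P) (H.induce (RB ∪ P)) (Subtype.val ⁻¹' B) (Subtype.val ⁻¹' P) le_rfl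
      ⟨⟨c, hcVB⟩⟩
  rcases recA with hleftA | ⟨cA, hcA⟩
  rotate_left
  · -- right branch, A side
    refine Or.inr ⟨↑cA, fun S hS => ?_⟩
    exact rightlift A RA (fun z a haA haP hz => ⟨a, ⟨haA, haP⟩, hz⟩) cA hcA S hS.1 hS.2.1
      (hsepP S hS)
  rcases recB with hleftB | ⟨cB, hcB⟩
  rotate_left
  · refine Or.inr ⟨↑cB, fun S hS => ?_⟩
    exact rightlift B RB (fun z b hbB hbP hz => ⟨b, ⟨hbB, hbP⟩, hz⟩) cB hcB S hS.1 hS.2.2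
      (hsepP S hS)
  -- both sides give two disjoint sets: combine them
  have extract : ∀ (VR X : Set V) (hcVR : c ∈ VR) (hqVR : q ∈ VR) (S1 S2 : Set ↥VR),
      MengerConn (H.induce VR) (Subtype.val ⁻¹' X) (Subtype.val ⁻¹' P) S1 →
      MengerConn (H.induce VR) (Subtype.val ⁻¹' X) (Subtype.val ⁻¹' P) S2 →
      Disjoint S1 S2 →
      ∃ Sc Sq : Set V, SetConn H Sc ∧ SetConn H Sq ∧ Sc ⊆ VR ∧ Sq ⊆ VR ∧
        Disjoint Sc Sq ∧ c ∈ Sc ∧ q ∈ Sq ∧ (Sc ∩ X).Nonempty ∧ (Sq ∩ X).Nonempty := by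
    intro VR X hcVR hqVR S1 S2 h1 h2 hd12
    have base : ∀ (S : Set ↥VR),
        MengerConn (H.induce VR) (Subtype.val ⁻¹' X) (Subtype.val ⁻¹' P) S →
        SetConn H (Subtype.val '' S) ∧ Subtype.val '' S ⊆ VR ∧
          ((Subtype.val '' S) ∩ X).Nonempty := by
      intro S hS
      refine ⟨setConn_image_val hS.1, ?_, ?_⟩
      · rintro z ⟨z', hz', rfl⟩; exact z'.2
      · obtain ⟨a', ha'S, ha'X⟩ := hS.2.1
        exact ⟨↑a', ⟨a', ha'S, rfl⟩, ha'X⟩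
    obtain ⟨hc1, hc2, hc3⟩ := base S1 h1
    obtain ⟨hd1, hd2, hd3⟩ := base S2 h2
    have hdownd : Disjoint (Subtype.val '' S1) (Subtype.val '' S2) := by
      rw [Set.disjoint_left]
      rintro z ⟨z1, hz1, rfl⟩ ⟨z2, hz2, hz⟩
      have : z2 = z1 := Subtype.val_injective hz
      exact Set.disjoint_left.1 hd12 hz1 (this ▸ hz2)
    obtain ⟨p1, hp1S, hp1P⟩ := h1.2.2
    obtain ⟨p2, hp2S, hp2P⟩ := h2.2.2
    have hp12 : (↑p1 : V) ≠ ↑p2 := by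
      intro h
      exact Set.disjoint_left.1 hd12 hp1S ((Subtype.val_injective h) ▸ hp2S)
    rcases hp1P with hc | hq' <;> [skip; rw [Set.mem_singleton_iff] at hq'] <;>
      rcases hp2P with hc2' | hq2' <;>
      first
        | skip
        | rw [Set.mem_singleton_iff] at hq2'
    · exact absurd (hc.trans hc2'.symm) hp12
    · exact ⟨Subtype.val '' S1, Subtype.val '' S2, hc1, hd1, hc2, hd2, hdownd,
        hc ▸ ⟨p1, hp1S, rfl⟩, hq2' ▸ ⟨p2, hp2S, rfl⟩, hc3, hd3⟩
    · exact ⟨Subtype.val '' S2, Subtype.val '' S1, hd1, hc1, hd2, hc2, hdownd.symm,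
        hc2' ▸ ⟨p2, hp2S, rfl⟩, hq' ▸ ⟨p1, hp1S, rfl⟩, hd3, hc3⟩
    · exact absurd (hq'.trans hq2'.symm) hp12
  obtain ⟨SA1, SA2, hSA1, hSA2, hdA⟩ := hleftA
  obtain ⟨SB1, SB2, hSB1, hSB2, hdB⟩ := hleftB
  obtain ⟨ScA, SqA, hA1, hA2, hA3, hA4, hA5, hA6, hA7, hA8, hA9⟩ :=
    extract (RA ∪ P) A hcVA hqVA SA1 SA2 hSA1 hSA2 hdA
  obtain ⟨ScB, SqB, hB1, hB2, hB3, hB4, hB5, hB6, hB7, hB8, hB9⟩ :=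
    extract (RB ∪ P) B hcVB hqVB SB1 SB2 hSB1 hSB2 hdB
  refine Or.inl ⟨ScA ∪ ScB, SqA ∪ SqB, ?_, ?_, ?_⟩
  · refine ⟨SetConn.union hA1 hB1 ⟨c, hA6, hB6⟩, ?_, ?_⟩
    · obtain ⟨a, ha1, ha2⟩ := hA8
      exact ⟨a, Or.inl ha1, ha2⟩
    · obtain ⟨b, hb1, hb2⟩ := hB8
      exact ⟨b, Or.inr hb1, hb2⟩
  · refine ⟨SetConn.union hA2 hB2 ⟨q, hA7, hB7⟩, ?_, ?_⟩
    · obtain ⟨a, ha1, ha2⟩ := hA9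
      exact ⟨a, Or.inl ha1, ha2⟩
    · obtain ⟨b, hb1, hb2⟩ := hB9
      exact ⟨b, Or.inr hb1, hb2⟩
  · rw [Set.disjoint_left]
    rintro z (hz1 | hz1) (hz2 | hz2)
    · exact Set.disjoint_left.1 hA5 hz1 hz2
    · -- z ∈ ScA, z ∈ SqB
      rcases hA3 hz1 with hra | hp
      · rcases hB4 hz2 with hrb | hp2
        · exact hdisjR z hra hrb
        · exact (hRAP z hra) hp2
      · rcases hp with rfl | hq'
        · exact Set.disjoint_left.1 hB5 hB6 hz2
        · rw [Set.mem_singleton_iff] at hq'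
          subst hq'
          exact Set.disjoint_left.1 hA5 hz1 hA7
    · -- z ∈ ScB, z ∈ SqA
      rcases hB3 hz1 with hrb | hp
      · rcases hA4 hz2 with hra | hp2
        · exact hdisjR z hra hrb
        · exact (hRBP z hrb) hp2
      · rcases hp with rfl | hq'
        · exact Set.disjoint_left.1 hA5 hA6 hz2
        · rw [Set.mem_singleton_iff] at hq'
          subst hq'
          exact Set.disjoint_left.1 hB5 hz1 hB7
    · exact Set.disjoint_left.1 hB5 hz1 hz2


/-! ### More helpers for the main theorem -/

theorem induce_addEdge_eq {G : SimpleGraph V} {S' : Set V} {a b : V} (ha : a ∈ S')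
    (hb : b ∈ S') :
    (addEdge G a b).induce S' = addEdge (G.induce S') ⟨a, ha⟩ ⟨b, hb⟩ := by
  ext x y
  show (addEdge G a b).Adj ↑x ↑y ↔ _
  constructor
  · rintro (h | ⟨hne, ⟨h1, h2⟩ | ⟨h1, h2⟩⟩)
    · exact Or.inl h
    · exact Or.inr ⟨fun hc => hne (congrArg Subtype.val hc),
        Or.inl ⟨Subtype.ext h1, Subtype.ext h2⟩⟩
    · exact Or.inr ⟨fun hc => hne (congrArg Subtype.val hc),
        Or.inr ⟨Subtype.ext h1, Subtype.ext h2⟩⟩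
  · rintro (h | ⟨hne, ⟨rfl, rfl⟩ | ⟨rfl, rfl⟩⟩)
    · exact Or.inl h
    · exact Or.inr ⟨fun hc => hne (Subtype.ext hc), Or.inl ⟨rfl, rfl⟩⟩
    · exact Or.inr ⟨fun hc => hne (Subtype.ext hc), Or.inr ⟨rfl, rfl⟩⟩

theorem image_val_compl_singleton {S' : Set V} (x : ↥S') :
    Subtype.val '' ({x}ᶜ : Set ↥S') = S' \ {↑x} := by
  ext z
  constructor
  · rintro ⟨z', hz', rfl⟩
    exact ⟨z'.2, fun h => hz' (Subtype.ext h)⟩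
  · rintro ⟨hzS, hzx⟩
    exact ⟨⟨z, hzS⟩, fun h => hzx (congrArg Subtype.val h), rfl⟩

theorem setConn_of_addEdge {G : SimpleGraph V} {a b : V} {S : Set V}
    (hS : ¬(a ∈ S ∧ b ∈ S)) (h : SetConn (addEdge G a b) S) : SetConn G S :=
  fun x hx y hy => reachIn_of_addEdge hS (h x hx y hy)

theorem exists_notin [Finite V] (T : Set V) (h : T.ncard < Nat.card V) : ∃ z, z ∉ T := by
  by_contra h'
  push_neg at h'
  have hsub : (Set.univ : Set V) ⊆ T := fun z _ => h' z
  have := Set.ncard_le_ncard hsub (Set.toFinite T)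
  rw [Set.ncard_univ] at this
  omega

theorem ncard_pair_le (a b : V) : ({a, b} : Set V).ncard ≤ 2 := by
  calc ({a, b} : Set V).ncard ≤ ({b} : Set V).ncard + 1 := Set.ncard_insert_le a {b}
    _ ≤ 2 := by rw [Set.ncard_singleton]

theorem ncard_triple_le (a b c : V) : ({a, b, c} : Set V).ncard ≤ 3 := by
  calc ({a, b, c} : Set V).ncard ≤ ({b, c} : Set V).ncard + 1 := Set.ncard_insert_le _ _
    _ ≤ 3 := by have := ncard_pair_le b c; omega

theorem build_edges {G : SimpleGraph V} {B : Fin 4 → Set V}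
    (e02 : ∃ x ∈ B 0, ∃ y ∈ B 2, G.Adj x y) (e03 : ∃ x ∈ B 0, ∃ y ∈ B 3, G.Adj x y)
    (e12 : ∃ x ∈ B 1, ∃ y ∈ B 2, G.Adj x y) (e13 : ∃ x ∈ B 1, ∃ y ∈ B 3, G.Adj x y)
    (e23 : ∃ x ∈ B 2, ∃ y ∈ B 3, G.Adj x y) :
    ∀ i j : Fin 4, i ≠ j → ¬(i = 0 ∧ j = 1) → ¬(i = 1 ∧ j = 0) →
      ∃ x ∈ B i, ∃ y ∈ B j, G.Adj x y := by
  have sw : ∀ {i j : Fin 4}, (∃ x ∈ B i, ∃ y ∈ B j, G.Adj x y) →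
      ∃ x ∈ B j, ∃ y ∈ B i, G.Adj x y := by
    rintro i j ⟨x, hx, y, hy, hxy⟩
    exact ⟨y, hy, x, hx, hxy.symm⟩
  intro i j hij h01 h10
  fin_cases i <;> fin_cases j <;>
    first
      | exact e02
      | exact sw e02
      | exact e03
      | exact sw e03
      | exact e12
      | exact sw e12
      | exact e13
      | exact sw e13
      | exact e23
      | exact sw e23
      | exact absurd (by decide) hij
      | exact absurd (by decide) h01
      | exact absurd (by decide) h10

/-- The restriction of a graph to a set (as a graph on the same vertex type). -/
def restrict (G : SimpleGraph V) (D : Set V) : SimpleGraph V where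
  Adj x y := x ∈ D ∧ y ∈ D ∧ G.Adj x y
  symm := ⟨fun x y ⟨hx, hy, h⟩ => ⟨hy, hx, h.symm⟩⟩
  loopless := ⟨fun x h => G.loopless.irrefl x h.2.2⟩

theorem reachIn_restrict_iff {G : SimpleGraph V} {D S : Set V} (hSD : S ⊆ D) {x y : V} :
    reachIn (restrict G D) S x y ↔ reachIn G S x y := by
  constructor
  · exact fun h => h.mono_graph fun a b _ _ (hab : (restrict G D).Adj a b) => hab.2.2
  · exact fun h => h.mono_graph fun a b ha hb hab => ⟨hSD ha, hSD hb, hab⟩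

theorem setConn_restrict_subset {G : SimpleGraph V} {D S : Set V}
    (h : SetConn (restrict G D) S) {a : V} (haS : a ∈ S) (haD : a ∈ D) : S ⊆ D := by
  intro z hz
  by_cases hza : z = a
  · exact hza ▸ haD
  · obtain ⟨w, hwS, hadj⟩ := (h z hz a haS).exists_adj hza
    exact hadj.1

/-- Lift a rooted `K₄ - e` structure from `addEdge (G.induce S') a b` down to `G`. -/
theorem lift_result {G : SimpleGraph V} {S' : Set V} {a b : V} (ha : a ∈ S') (hb : b ∈ S')
    (B' : Fin 4 → Set ↥S')
    (hconn : ∀ i, (B' i).Nonempty ∧ SetConn (addEdge (G.induce S') ⟨a, ha⟩ ⟨b, hb⟩) (B' i))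
    (hdisj : Pairwise fun i j => Disjoint (B' i) (B' j))
    (hedge : ∀ i j : Fin 4, i ≠ j → ¬(i = 0 ∧ j = 1) → ¬(i = 1 ∧ j = 0) →
      ∃ x ∈ B' i, ∃ y ∈ B' j, (addEdge (G.induce S') ⟨a, ha⟩ ⟨b, hb⟩).Adj x y)
    (haB : ⟨a, ha⟩ ∈ B' 0) (hbB : ⟨b, hb⟩ ∈ B' 1) :
    (∀ i, (Subtype.val '' B' i).Nonempty ∧ SetConn G (Subtype.val '' B' i)) ∧
    (Pairwise fun i j => Disjoint (Subtype.val '' B' i) (Subtype.val '' B' j)) ∧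
    (∀ i j : Fin 4, i ≠ j → ¬(i = 0 ∧ j = 1) → ¬(i = 1 ∧ j = 0) →
      ∃ x ∈ Subtype.val '' B' i, ∃ y ∈ Subtype.val '' B' j, G.Adj x y) ∧
    a ∈ Subtype.val '' B' 0 ∧ b ∈ Subtype.val '' B' 1 := by
  have honly : ∀ (i : Fin 4) (w : ↥S'), w ∈ B' 0 → w ∈ B' i → i = 0 := by
    intro i w h0 hi
    by_contra hne
    exact Set.disjoint_left.1 (hdisj hne) hi h0
  have honly1 : ∀ (i : Fin 4) (w : ↥S'), w ∈ B' 1 → w ∈ B' i → i = 1 := by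
    intro i w h1 hi
    by_contra hne
    exact Set.disjoint_left.1 (hdisj hne) hi h1
  have heq := (induce_addEdge_eq (G := G) ha hb).symm
  have hconn' : ∀ i, SetConn G (Subtype.val '' B' i) := by
    intro i
    have h1 : SetConn ((addEdge G a b).induce S') (B' i) := by
      rw [induce_addEdge_eq ha hb]; exact (hconn i).2
    have h2 : SetConn (addEdge G a b) (Subtype.val '' B' i) := setConn_image_val h1
    refine setConn_of_addEdge ?_ h2
    rintro ⟨⟨a', haB', ha'⟩, ⟨b', hbB', hb'⟩⟩
    have h3 : a' = ⟨a, ha⟩ := Subtype.ext ha'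
    have h4 : b' = ⟨b, hb⟩ := Subtype.ext hb'
    subst h3; subst h4
    have h5 := honly i _ haB haB'
    have h6 := honly1 i _ hbB hbB'
    rw [h5] at h6
    exact absurd h6 (by decide)
  refine ⟨fun i => ⟨⟨↑(hconn i).1.some, (hconn i).1.some, (hconn i).1.some_mem, rfl⟩, hconn' i⟩,
    ?_, ?_, ⟨⟨a, ha⟩, haB, rfl⟩, ⟨⟨b, hb⟩, hbB, rfl⟩⟩
  · intro i j hne
    rw [Set.disjoint_left]
    rintro z ⟨z1, hz1, rfl⟩ ⟨z2, hz2, hz⟩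
    have : z2 = z1 := Subtype.val_injective hz
    exact Set.disjoint_left.1 (hdisj hne) hz1 (this ▸ hz2)
  · intro i j hij h01 h10
    obtain ⟨x', hx', y', hy', hadj⟩ := hedge i j hij h01 h10
    refine ⟨↑x', ⟨x', hx', rfl⟩, ↑y', ⟨y', hy', rfl⟩, ?_⟩
    have hadj2 : ((addEdge G a b).induce S').Adj x' y' := by
      rw [induce_addEdge_eq ha hb]; exact hadj
    rcases (hadj2 : (addEdge G a b).Adj ↑x' ↑y') with h | ⟨hne, ⟨h1, h2⟩ | ⟨h1, h2⟩⟩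
    · exact h
    · exfalso
      have hx0 : x' = ⟨a, ha⟩ := Subtype.ext h1
      have hy1 : y' = ⟨b, hb⟩ := Subtype.ext h2
      exact h01 ⟨honly i _ haB (hx0 ▸ hx'), honly1 j _ hbB (hy1 ▸ hy')⟩
    · exfalso
      have hx1 : x' = ⟨b, hb⟩ := Subtype.ext h1
      have hy0 : y' = ⟨a, ha⟩ := Subtype.ext h2
      exact h10 ⟨honly1 i _ hbB (hx1 ▸ hx'), honly j _ haB (hy0 ▸ hy')⟩


set_option maxHeartbeats 1000000 in
/-- Main internal induction: rooted `K₄ - e` minor for internally-3-connected-style graphs. -/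
theorem main_internal (n : ℕ) : ∀ (V : Type u) [Finite V] (G : SimpleGraph V) (u v : V),
    Nat.card V ≤ n → 3 ≤ Nat.card V → u ≠ v →
    (∀ x y z : V, y ≠ x → z ≠ x → reachIn G ({x}ᶜ : Set V) y z) →
    (∀ w : V, w ≠ u → w ≠ v → 3 ≤ (G.neighborSet w).ncard) →
    ∃ B : Fin 4 → Set V,
      (∀ i, (B i).Nonempty ∧ SetConn G (B i)) ∧
      (Pairwise fun i j => Disjoint (B i) (B j)) ∧
      (∀ i j : Fin 4, i ≠ j → ¬(i = 0 ∧ j = 1) → ¬(i = 1 ∧ j = 0) →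
        ∃ x ∈ B i, ∃ y ∈ B j, G.Adj x y) ∧
      u ∈ B 0 ∧ v ∈ B 1 := by
  induction n using Nat.strong_induction_on with
  | _ n IH =>
  intro V _ G u v hn h3 huv hmc hdeg
  classical
  set D : Set V := {z | z ≠ u ∧ z ≠ v} with hDdef
  obtain ⟨w₀, hw₀⟩ : ∃ w₀, w₀ ∉ ({u, v} : Set V) :=
    exists_notin _ (lt_of_le_of_lt (ncard_pair_le u v) (by omega))
  have hw₀u : w₀ ≠ u := fun h => hw₀ (Or.inl h)
  have hw₀v : w₀ ≠ v := fun h => hw₀ (Or.inr h)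
  have hw₀D : w₀ ∈ D := ⟨hw₀u, hw₀v⟩
  have h4 : 4 ≤ Nat.card V := by
    have hd := hdeg w₀ hw₀u hw₀v
    have hsub : insert w₀ (G.neighborSet w₀) ⊆ Set.univ := fun z _ => trivial
    have h1 : (insert w₀ (G.neighborSet w₀)).ncard = (G.neighborSet w₀).ncard + 1 :=
      Set.ncard_insert_of_notMem (fun h => G.loopless.irrefl w₀ h) (Set.toFinite _)
    have h2 := Set.ncard_le_ncard hsub (Set.toFinite _)
    rw [Set.ncard_univ] at h2
    omega
  set A : Set V := {z | G.Adj u z ∧ z ≠ v} with hAdef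
  set B : Set V := {z | G.Adj v z ∧ z ≠ u} with hBdef
  have hAD : A ⊆ D := fun z hz => ⟨fun h => G.loopless.irrefl u (h ▸ hz.1), hz.2⟩
  have hBD : B ⊆ D := fun z hz => ⟨hz.2, fun h => G.loopless.irrefl v (h ▸ hz.1)⟩
  have hAne : A.Nonempty := by
    have hr := hmc v u w₀ huv hw₀v
    obtain ⟨z, hz, hadj⟩ := hr.exists_adj (fun h => hw₀u h.symm)
    exact ⟨z, hadj, hz⟩
  have hBne : B.Nonempty := by
    have hr := hmc u v w₀ (Ne.symm huv) hw₀u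
    obtain ⟨z, hz, hadj⟩ := hr.exists_adj (fun h => hw₀v h.symm)
    exact ⟨z, hadj, hz⟩
  -- Case 0: v has just one neighbor besides u
  by_cases hc0 : ∃ c, c ≠ u ∧ c ≠ v ∧ ∀ z, G.Adj v z → z = u ∨ z = c
  · obtain ⟨c, hcu, hcv, hcnbr⟩ := hc0
    have hvc : G.Adj v c := by
      obtain ⟨b, hbadj, hbu⟩ := hBne
      rcases hcnbr b hbadj with rfl | rfl
      · exact absurd rfl hbu
      · exact hbadj
    set S' : Set V := {v}ᶜ with hS'def
    have huS' : u ∈ S' := huv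
    have hcS' : c ∈ S' := hcv
    have hcard_lt : Nat.card ↥S' < Nat.card V :=
      nat_card_subtype_lt (x := v) (fun h => h rfl)
    have hcard3 : 3 ≤ Nat.card ↥S' := by
      obtain ⟨w₁, hw₁⟩ : ∃ w₁, w₁ ∉ ({u, c, v} : Set V) :=
        exists_notin _ (lt_of_le_of_lt (ncard_triple_le u c v) (by omega))
      have hw₁v : w₁ ∈ S' := fun h => hw₁ (Or.inr (Or.inr h))
      refine three_le_nat_card (⟨u, huS'⟩ : ↥S') ⟨c, hcS'⟩ ⟨w₁, hw₁v⟩ ?_ ?_ ?_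
      · exact fun h => hcu (congrArg Subtype.val h).symm
      · exact fun h => hw₁ (Or.inl (congrArg Subtype.val h).symm)
      · exact fun h => hw₁ (Or.inr (Or.inl (congrArg Subtype.val h).symm))
    set G3 := addEdge (G.induce S') ⟨u, huS'⟩ ⟨c, hcS'⟩ with hG3def
    have hmc3 : ∀ (x y z : ↥S'), y ≠ x → z ≠ x → reachIn G3 ({x}ᶜ : Set ↥S') y z := by
      intro x y z hy hz
      have h1 : reachIn G ({(↑x : V)}ᶜ) ↑y ↑z :=
        hmc ↑x ↑y ↑z (fun h => hy (Subtype.ext h)) (fun h => hz (Subtype.ext h))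
      have h2 := reachIn_reroute (v := v) (p := u) (q := c) h1 y.2 z.2
        (fun t _ hadj => hcnbr t hadj)
      have hsets : ({(↑x : V)}ᶜ : Set V) \ {v} = S' \ {↑x} := by
        ext t
        constructor
        · rintro ⟨ht1, ht2⟩; exact ⟨ht2, ht1⟩
        · rintro ⟨ht1, ht2⟩; exact ⟨ht2, ht1⟩
      rw [hsets] at h2
      have h3 : reachIn ((addEdge G u c).induce S') ({x}ᶜ) y z := by
        rw [reachIn_induce_iff, image_val_compl_singleton]; exact h2
      rwa [induce_addEdge_eq huS' hcS'] at h3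
    have hdeg3 : ∀ w' : ↥S', w' ≠ ⟨u, huS'⟩ → w' ≠ ⟨c, hcS'⟩ →
        3 ≤ (G3.neighborSet w').ncard := by
      intro w' hwu hwc
      have hwu' : (↑w' : V) ≠ u := fun h => hwu (Subtype.ext h)
      have hwc' : (↑w' : V) ≠ c := fun h => hwc (Subtype.ext h)
      have hwv' : (↑w' : V) ≠ v := w'.2
      have hnb : G.neighborSet ↑w' ⊆ S' := by
        intro t ht htv
        have htv' : t = v := htv
        rcases hcnbr ↑w' ((htv' ▸ ht).symm) with h | h
        exacts [hwu' h, hwc' h]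
      rw [hG3def, neighborSet_addEdge hwu hwc, ncard_neighborSet_induce hnb]
      exact hdeg ↑w' hwu' hwv'
    obtain ⟨B', hconn', hdisj', hedge', hB0', hB1'⟩ :=
      IH (Nat.card ↥S') (lt_of_le_of_lt (le_refl _) (lt_of_lt_of_le hcard_lt hn))
        ↥S' G3 ⟨u, huS'⟩ ⟨c, hcS'⟩ le_rfl hcard3
        (fun h => hcu (congrArg Subtype.val h).symm) hmc3 hdeg3
    obtain ⟨hLconn, hLdisj, hLedge, hLa, hLb⟩ :=
      lift_result huS' hcS' B' hconn' hdisj' hedge' hB0' hB1'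
    set BB : Fin 4 → Set V :=
      fun i => if i = 1 then Subtype.val '' B' 1 ∪ {v} else Subtype.val '' B' i with hBBdef
    have hBB1 : BB 1 = Subtype.val '' B' 1 ∪ {v} := if_pos rfl
    have hBBne : ∀ i : Fin 4, i ≠ 1 → BB i = Subtype.val '' B' i := fun i h => if_neg h
    have hBBsub : ∀ i, Subtype.val '' B' i ⊆ BB i := by
      intro i
      by_cases h : i = 1
      · subst h; rw [hBB1]; exact Set.subset_union_left
      · rw [hBBne i h]
    have hvnotim : ∀ i, v ∉ Subtype.val '' B' i := by
      rintro i ⟨z', -, hz⟩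
      exact z'.2 hz
    refine ⟨BB, ?_, ?_, ?_, ?_, ?_⟩
    · intro i
      by_cases h : i = 1
      · subst h
        rw [hBB1]
        refine ⟨⟨v, Or.inr rfl⟩, ?_⟩
        exact SetConn.union_adj (hLconn 1).2 (SetConn.singleton v) hLb rfl hvc.symm
      · rw [hBBne i h]
        exact hLconn i
    · intro i j hij
      by_cases hi : i = 1 <;> by_cases hj : j = 1
      · exact absurd (hi.trans hj.symm) hij
      · subst hi
        rw [Set.disjoint_left, hBB1, hBBne j hj]
        rintro z (hz1 | hz1) hz2
        · exact Set.disjoint_left.1 (hLdisj hij) hz1 hz2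
        · rw [Set.mem_singleton_iff] at hz1
          subst hz1
          exact hvnotim j hz2
      · subst hj
        rw [Set.disjoint_left, hBBne i hi, hBB1]
        rintro z hz1 (hz2 | hz2)
        · exact Set.disjoint_left.1 (hLdisj hij) hz1 hz2
        · rw [Set.mem_singleton_iff] at hz2
          subst hz2
          exact hvnotim i hz1
      · rw [hBBne i hi, hBBne j hj]
        exact hLdisj hij
    · intro i j hij h01 h10
      obtain ⟨x, hx, y, hy, h⟩ := hLedge i j hij h01 h10
      exact ⟨x, hBBsub i hx, y, hBBsub j hy, h⟩
    · rw [hBBne 0 (by decide)]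
      exact hLa
    · rw [hBB1]
      exact Or.inr rfl
  -- Otherwise split according to connectivity of G - {u, v}
  by_cases hHconn : ∀ x ∈ D, ∀ y ∈ D, reachIn G D x y
  · -- G - {u, v} is connected: Menger
    set GD := restrict G D with hGDdef
    have hmenger := menger2 (Nat.card V + GD.edgeSet.ncard) V GD A B le_rfl ⟨u⟩
    rcases hmenger with ⟨S, T, hS, hT, hdST⟩ | ⟨c, hc⟩
    · -- two disjoint connecting sets: direct construction
      obtain ⟨a₀, ha₀S, ha₀A⟩ := hS.2.1
      have hSD : S ⊆ D := setConn_restrict_subset hS.1 ha₀S (hAD ha₀A)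
      obtain ⟨t₁, ht₁T, ht₁A⟩ := hT.2.1
      have hTD : T ⊆ D := setConn_restrict_subset hT.1 ht₁T (hAD ht₁A)
      have hSconn : SetConn G S := fun x hx y hy => (reachIn_restrict_iff hSD).1 (hS.1 x hx y hy)
      have ha₀DT : a₀ ∈ D \ T := ⟨hSD ha₀S, Set.disjoint_left.1 hdST ha₀S⟩
      set K := compIn G (D \ T) a₀ with hKdef
      have hKsub : K ⊆ D \ T := compIn_subset
      have hSK : S ⊆ K :=
        subset_compIn ha₀S (fun z hz => ⟨hSD hz, Set.disjoint_left.1 hdST hz⟩) hSconn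
      have hreach : reachIn G D a₀ t₁ := hHconn a₀ (hSD ha₀S) t₁ (hTD ht₁T)
      rcases hreach.split (T := T) ha₀DT.2 with hleft | ⟨t, htT, htD, b, hreachb, hadj⟩
      · exact absurd hleft.mem_right fun h => h.2 ht₁T
      obtain ⟨b₁, hb₁S, hb₁B⟩ := hS.2.2
      obtain ⟨t₂, ht₂T, ht₂B⟩ := hT.2.2
      have hbK : b ∈ K := hreachb
      have hTconn : SetConn G T := fun x hx y hy => (reachIn_restrict_iff hTD).1 (hT.1 x hx y hy)
      have huK : u ∉ K := fun h => (hKsub h).1.1 rfl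
      have hvK : v ∉ K := fun h => (hKsub h).1.2 rfl
      have huT : u ∉ T := fun h => (hTD h).1 rfl
      have hvT : v ∉ T := fun h => (hTD h).2 rfl
      refine ⟨![{u}, {v}, K, T], ?_, ?_, ?_, rfl, rfl⟩
      · intro i
        fin_cases i
        · exact ⟨⟨u, rfl⟩, SetConn.singleton u⟩
        · exact ⟨⟨v, rfl⟩, SetConn.singleton v⟩
        · exact ⟨⟨a₀, mem_compIn_self ha₀DT⟩, compIn_conn⟩
        · exact ⟨⟨t₁, ht₁T⟩, hTconn⟩
      · refine build_disjoint ?_ ?_ ?_ ?_ ?_ ?_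
        · exact Set.disjoint_singleton_left.2 (fun h => huv h)
        · exact Set.disjoint_singleton_left.2 huK
        · exact Set.disjoint_singleton_left.2 huT
        · exact Set.disjoint_singleton_left.2 hvK
        · exact Set.disjoint_singleton_left.2 hvT
        · rw [Set.disjoint_left]
          exact fun z hz1 hz2 => (hKsub hz1).2 hz2
      · refine build_edges ?_ ?_ ?_ ?_ ?_
        · exact ⟨u, rfl, a₀, hSK ha₀S, ha₀A.1⟩
        · exact ⟨u, rfl, t₁, ht₁T, ht₁A.1⟩
        · exact ⟨v, rfl, b₁, hSK hb₁S, hb₁B.1⟩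
        · exact ⟨v, rfl, t₂, ht₂T, ht₂B.1⟩
        · exact ⟨b, hbK, t, htT, hadj⟩
    · -- single separating vertex c
      have hcD : c ∈ D := by
        refine hc D ⟨fun x hx y hy => (reachIn_restrict_iff (subset_refl D)).2
          (hHconn x hx y hy), ?_, ?_⟩
        · obtain ⟨a, ha⟩ := hAne; exact ⟨a, hAD ha, ha⟩
        · obtain ⟨b, hb⟩ := hBne; exact ⟨b, hBD hb, hb⟩
      set W : Set V := {z | z ≠ c ∧ z ≠ u} with hWdef
      have hvW : v ∈ W := ⟨fun h => hcD.2 h.symm, fun h => huv h.symm⟩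
      set M := compIn G W v with hMdef
      have hvM : v ∈ M := mem_compIn_self hvW
      have hMW : M ⊆ W := compIn_subset
      have hcM : c ∉ M := fun h => (hMW h).1 rfl
      have huM : u ∉ M := fun h => (hMW h).2 rfl
      have hcfact : ∀ m ∈ M, m ≠ v → ¬G.Adj u m := by
        intro m hm hmv hadj
        have hrm : reachIn G W m v := (hm : reachIn G W v m).symm
        rcases hrm.split (T := {v}) hmv with hleft | ⟨t, htv, htW, b, hreachb, hadjb⟩
        · exact hleft.mem_right.2 rfl
        · have htv' : t = v := htv
          have hadjb' : G.Adj b v := htv' ▸ hadjb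
          have hbmem := hreachb.mem_right
          set P₀ := compIn G (W \ {v}) m with hP₀def
          have hP₀sub : P₀ ⊆ W \ {v} := compIn_subset
          have hP₀D : P₀ ⊆ D := by
            intro z hz
            obtain ⟨⟨hz1, hz2⟩, hz3⟩ := hP₀sub hz
            exact ⟨hz2, hz3⟩
          have hmP₀ : m ∈ P₀ := mem_compIn_self ⟨hMW hm, hmv⟩
          have hbP₀ : b ∈ P₀ := hreachb
          have hMconn : MengerConn GD A B P₀ := by
            refine ⟨fun x hx y hy => (reachIn_restrict_iff hP₀D).2 (compIn_conn x hx y hy),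
              ⟨m, hmP₀, hadj, hmv⟩, ⟨b, hbP₀, hadjb'.symm, hbmem.1.2⟩⟩
          exact (hP₀sub (hc P₀ hMconn)).1.1 rfl
      have hM2 : ∃ m₀ ∈ M, m₀ ≠ v := by
        by_contra hno
        push_neg at hno
        refine hc0 ⟨c, hcD.1, hcD.2, fun z hadj => ?_⟩
        by_cases hzu : z = u
        · exact Or.inl hzu
        by_cases hzc : z = c
        · exact Or.inr hzc
        exfalso
        have hzM : z ∈ M := compIn_closed hvM ⟨hzc, hzu⟩ hadj
        have hzv : z ≠ v := fun h => G.loopless.irrefl v (h ▸ hadj)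
        exact hzv (hno z hzM)
      obtain ⟨m₀, hm₀M, hm₀v⟩ := hM2
      set S' : Set V := M ∪ {c} with hS'def
      have hvS' : v ∈ S' := Or.inl hvM
      have hcS'2 : c ∈ S' := Or.inr rfl
      have hS'sub : ∀ z ∈ S', z ≠ u := by
        rintro z (hz | hz) h
        · exact huM (h ▸ hz)
        · have hzc : z = c := hz
          exact hcD.1 (hzc ▸ h)
      have huS'2 : u ∉ S' := fun h => hS'sub u h rfl
      have hNM : ∀ w ∈ M, w ≠ v → ∀ z, G.Adj w z → z ∈ S' := by
        intro w hw hwv z hadj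
        by_cases hzc : z = c
        · exact Or.inr (by rw [hzc]; rfl)
        by_cases hzu : z = u
        · exact absurd (hzu ▸ hadj).symm (hcfact w hw hwv)
        · exact Or.inl (compIn_closed hw ⟨hzc, hzu⟩ hadj)
      have hcard_lt : Nat.card ↥S' < Nat.card V := nat_card_subtype_lt huS'2
      have hcard3 : 3 ≤ Nat.card ↥S' := by
        refine three_le_nat_card (⟨v, hvS'⟩ : ↥S') ⟨m₀, Or.inl hm₀M⟩ ⟨c, hcS'2⟩ ?_ ?_ ?_
        · exact fun h => hm₀v (congrArg Subtype.val h).symm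
        · exact fun h => hcD.2 (congrArg Subtype.val h).symm
        · intro h
          have h2 : (m₀ : V) = c := congrArg Subtype.val h
          exact hcM (h2 ▸ hm₀M)
      set G2 := addEdge (G.induce S') ⟨c, hcS'2⟩ ⟨v, hvS'⟩ with hG2def
      have hmemM : ∀ w : ↥S', (↑w : V) ≠ c → (↑w : V) ∈ M := by
        intro w hwc
        rcases w.2 with h | h
        · exact h
        · exact absurd h hwc
      have hmc2 : ∀ (x y z : ↥S'), y ≠ x → z ≠ x → reachIn G2 ({x}ᶜ : Set ↥S') y z := by
        intro x y z hy hz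
        have hyx : (↑y : V) ≠ ↑x := fun h => hy (Subtype.ext h)
        have hzx : (↑z : V) ≠ ↑x := fun h => hz (Subtype.ext h)
        have main : reachIn (addEdge G c v) (S' \ {(↑x : V)}) ↑y ↑z := by
          by_cases hxc : (↑x : V) = c
          · have hMeq : S' \ {(↑x : V)} = M := by
              rw [hxc]
              ext t
              constructor
              · rintro ⟨ht | ht, htc⟩
                · exact ht
                · exact absurd ht htc
              · intro ht
                exact ⟨Or.inl ht, fun h => hcM (h ▸ ht)⟩
            rw [hMeq]
            have hyM : (↑y : V) ∈ M := hmemM y (fun h => hyx (h.trans hxc.symm))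
            have hzM : (↑z : V) ∈ M := hmemM z (fun h => hzx (h.trans hxc.symm))
            exact (compIn_conn (G := G) (S := W) (x := v) ↑y hyM ↑z hzM).mono_graph
              (fun a b _ _ h => addEdge_adj_of_adj c v h)
          by_cases hxv : (↑x : V) = v
          · have hgoal : ∀ w : ↥S', (↑w : V) ≠ ↑x →
                reachIn (addEdge G c v) (S' \ {(↑x : V)}) ↑w c := by
              intro w hwx
              have hwv : (↑w : V) ≠ v := fun h => hwx (h.trans hxv.symm)
              have hcmem : c ∈ S' \ {(↑x : V)} := ⟨hcS'2, fun h => hcD.2 ((h : c = ↑x).trans hxv)⟩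
              by_cases hwc : (↑w : V) = c
              · rw [hwc]
                exact reachIn.refl hcmem
              · have hwM : (↑w : V) ∈ M := hmemM w hwc
                have h1 : reachIn G ({v}ᶜ) ↑w c := hmc v ↑w c hwv hcD.2
                rcases h1.split (T := S'ᶜ) (fun h => h w.2) with
                  hleft | ⟨t, htS', htv, b, hreachb, hadjb⟩
                · rw [compl_diff_compl_eq S' v] at hleft
                  have hleft2 : reachIn G (S' \ {(↑x : V)}) ↑w c := by
                    rw [hxv]; exact hleft
                  exact hleft2.mono_graph (fun a b _ _ h => addEdge_adj_of_adj c v h)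
                · rw [compl_diff_compl_eq S' v] at hreachb
                  have hbmem := hreachb.mem_right
                  rcases hbmem.1 with hbM | hbc
                  · exact absurd (hNM b hbM hbmem.2 t hadjb) htS'
                  · have hbc' : b = c := hbc
                    have hr2 : reachIn G (S' \ {(↑x : V)}) ↑w c := by
                      rw [hxv, ← hbc']
                      exact hreachb
                    exact hr2.mono_graph (fun p q _ _ h => addEdge_adj_of_adj c v h)
            exact (hgoal y hyx).trans (hgoal z hzx).symm
          · -- x ∈ M \ {v}; connect everything to v
            have hvmem : v ∈ S' \ {(↑x : V)} := ⟨hvS', fun h => hxv ((h : v = ↑x)).symm⟩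
            have hgoal : ∀ w : ↥S', (↑w : V) ≠ ↑x →
                reachIn (addEdge G c v) (S' \ {(↑x : V)}) ↑w v := by
              intro w hwx
              by_cases hwv : (↑w : V) = v
              · rw [hwv]; exact reachIn.refl hvmem
              by_cases hwc : (↑w : V) = c
              · have hcmem : c ∈ S' \ {(↑x : V)} := ⟨hcS'2, fun h => hxc ((h : c = ↑x)).symm⟩
                rw [hwc]
                exact reachIn.single hcmem hvmem
                  (Or.inr ⟨hcD.2, Or.inl ⟨rfl, rfl⟩⟩)
              · have hwM : (↑w : V) ∈ M := hmemM w hwc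
                have h1 : reachIn G ({(↑x : V)}ᶜ) ↑w v := hmc ↑x ↑w v hwx (fun h => hxv h.symm)
                rcases h1.split (T := S'ᶜ) (fun h => h w.2) with
                  hleft | ⟨t, htS', htx, b, hreachb, hadjb⟩
                · rw [compl_diff_compl_eq S' ↑x] at hleft
                  exact hleft.mono_graph (fun a b _ _ h => addEdge_adj_of_adj c v h)
                · rw [compl_diff_compl_eq S' ↑x] at hreachb
                  have hbmem := hreachb.mem_right
                  have hbv : (↑x : V) ≠ v := hxv
                  by_cases hbisv : b = v
                  · have hr2 : reachIn G (S' \ {(↑x : V)}) ↑w v := hbisv ▸ hreachb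
                    exact hr2.mono_graph (fun p q _ _ h => addEdge_adj_of_adj c v h)
                  rcases hbmem.1 with hbM | hbc
                  · exact absurd (hNM b hbM hbisv t hadjb) htS'
                  · -- b = c : reach w c then use the added edge c-v
                    have hbc' : b = c := hbc
                    have hr : reachIn G (S' \ {(↑x : V)}) ↑w c := hbc' ▸ hreachb
                    have hrc : reachIn (addEdge G c v) (S' \ {(↑x : V)}) ↑w c :=
                      hr.mono_graph (fun p q _ _ h => addEdge_adj_of_adj c v h)
                    exact hrc.tail hvmem (Or.inr ⟨hcD.2, Or.inl ⟨rfl, rfl⟩⟩)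
            exact (hgoal y hyx).trans (hgoal z hzx).symm
        have h3' : reachIn ((addEdge G c v).induce S') ({x}ᶜ) y z := by
          rw [reachIn_induce_iff, image_val_compl_singleton]
          exact main
        rwa [induce_addEdge_eq hcS'2 hvS'] at h3'
      have hdeg2 : ∀ w' : ↥S', w' ≠ ⟨c, hcS'2⟩ → w' ≠ ⟨v, hvS'⟩ →
          3 ≤ (G2.neighborSet w').ncard := by
        intro w' hwc hwv
        have hwc' : (↑w' : V) ≠ c := fun h => hwc (Subtype.ext h)
        have hwv' : (↑w' : V) ≠ v := fun h => hwv (Subtype.ext h)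
        have hwM : (↑w' : V) ∈ M := hmemM w' hwc'
        have hwu' : (↑w' : V) ≠ u := fun h => huM (h ▸ hwM)
        have hnb : G.neighborSet ↑w' ⊆ S' := fun t ht => hNM ↑w' hwM hwv' t ht
        rw [hG2def, neighborSet_addEdge hwc hwv, ncard_neighborSet_induce hnb]
        exact hdeg ↑w' hwu' hwv'
      obtain ⟨B', hconn', hdisj', hedge', hB0', hB1'⟩ :=
        IH (Nat.card ↥S') (lt_of_lt_of_le hcard_lt hn) ↥S' G2 ⟨c, hcS'2⟩ ⟨v, hvS'⟩
          le_rfl hcard3 (fun h => hcD.2 (congrArg Subtype.val h)) hmc2 hdeg2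
      obtain ⟨hLconn, hLdisj, hLedge, hLc, hLv⟩ :=
        lift_result hcS'2 hvS' B' hconn' hdisj' hedge' hB0' hB1'
      -- connect u to c from outside S'
      rcases (hmc v u c huv hcD.2).split (T := S') huS'2 with
        hleft | ⟨t, htS', htv, b, hreachb, hadjb⟩
      · exact absurd hleft.mem_right fun h => h.2 hcS'2
      have hbmem := hreachb.mem_right
      have htc : t = c := by
        rcases htS' with htM | htc
        · exact absurd (hNM t htM htv b hadjb.symm) hbmem.2
        · exact htc
      subst htc
      set L := compIn G (({v}ᶜ : Set V) \ S') u with hLdef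
      have huL : u ∈ L := mem_compIn_self ⟨huv, huS'2⟩
      have hbL : b ∈ L := hreachb
      have hLsub : L ⊆ ({v}ᶜ : Set V) \ S' := compIn_subset
      have himsub : ∀ i, Subtype.val '' B' i ⊆ S' := by
        rintro i z ⟨z', -, rfl⟩
        exact z'.2
      set BB : Fin 4 → Set V :=
        fun i => if i = 0 then L ∪ Subtype.val '' B' 0 else Subtype.val '' B' i with hBBdef
      have hBB0 : BB 0 = L ∪ Subtype.val '' B' 0 := if_pos rfl
      have hBBne : ∀ i : Fin 4, i ≠ 0 → BB i = Subtype.val '' B' i := fun i h => if_neg h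
      have hBBsub : ∀ i, Subtype.val '' B' i ⊆ BB i := by
        intro i
        by_cases h : i = 0
        · subst h; rw [hBB0]; exact Set.subset_union_right
        · rw [hBBne i h]
      refine ⟨BB, ?_, ?_, ?_, ?_, ?_⟩
      · intro i
        by_cases h : i = 0
        · subst h
          rw [hBB0]
          exact ⟨⟨u, Or.inl huL⟩,
            SetConn.union_adj compIn_conn (hLconn 0).2 hbL hLc hadjb⟩
        · rw [hBBne i h]
          exact hLconn i
      · intro i j hij
        have hdLim : ∀ k, Disjoint L (Subtype.val '' B' k) := by
          intro k
          rw [Set.disjoint_left]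
          exact fun z hz1 hz2 => (hLsub hz1).2 (himsub k hz2)
        by_cases hi : i = 0 <;> by_cases hj : j = 0
        · exact absurd (hi.trans hj.symm) hij
        · subst hi
          rw [Set.disjoint_left, hBB0, hBBne j hj]
          rintro z (hz1 | hz1) hz2
          · exact Set.disjoint_left.1 (hdLim j) hz1 hz2
          · exact Set.disjoint_left.1 (hLdisj hij) hz1 hz2
        · subst hj
          rw [Set.disjoint_left, hBBne i hi, hBB0]
          rintro z hz1 (hz2 | hz2)
          · exact Set.disjoint_left.1 (hdLim i) hz2 hz1
          · exact Set.disjoint_left.1 (hLdisj hij) hz1 hz2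
        · rw [hBBne i hi, hBBne j hj]
          exact hLdisj hij
      · intro i j hij h01 h10
        obtain ⟨x, hx, y, hy, h⟩ := hLedge i j hij h01 h10
        exact ⟨x, hBBsub i hx, y, hBBsub j hy, h⟩
      · rw [hBB0]
        exact Or.inl huL
      · rw [hBBne 1 (by decide)]
        exact hLv
  · -- G - {u, v} disconnected
    push_neg at hHconn
    obtain ⟨x₀, hx₀D, y₀, hy₀D, hnr⟩ := hHconn
    set C := compIn G D x₀ with hCdef
    have hCD : C ⊆ D := compIn_subset
    have hx₀C : x₀ ∈ C := mem_compIn_self hx₀D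
    have hy₀C : y₀ ∉ C := hnr
    set S' : Set V := C ∪ {u, v} with hS'def
    have huS' : u ∈ S' := Or.inr (Or.inl rfl)
    have hvS' : v ∈ S' := Or.inr (Or.inr rfl)
    have hy₀S' : y₀ ∉ S' := by
      rintro (h | h | h)
      · exact hy₀C h
      · exact hy₀D.1 h
      · exact hy₀D.2 h
    have hf1 : ∀ z ∈ C, ∀ t, G.Adj z t → t ∈ S' := by
      intro z hz t hadj
      by_cases htD : t ∈ D
      · exact Or.inl (compIn_closed hz htD hadj)
      · by_cases htu : t = u
        · exact Or.inr (Or.inl htu)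
        · refine Or.inr (Or.inr ?_)
          by_contra htv
          exact htD ⟨htu, htv⟩
    have hcard_lt : Nat.card ↥S' < Nat.card V := nat_card_subtype_lt hy₀S'
    have hcard3 : 3 ≤ Nat.card ↥S' := by
      refine three_le_nat_card (⟨u, huS'⟩ : ↥S') ⟨v, hvS'⟩ ⟨x₀, Or.inl hx₀C⟩ ?_ ?_ ?_
      · exact fun h => huv (congrArg Subtype.val h)
      · exact fun h => hx₀D.1 (congrArg Subtype.val h).symm
      · exact fun h => hx₀D.2 (congrArg Subtype.val h).symm
    set G1 := addEdge (G.induce S') ⟨u, huS'⟩ ⟨v, hvS'⟩ with hG1def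
    have hmc1 : ∀ (x y z : ↥S'), y ≠ x → z ≠ x → reachIn G1 ({x}ᶜ : Set ↥S') y z := by
      intro x y z hy hz
      have hyx : (↑y : V) ≠ ↑x := fun h => hy (Subtype.ext h)
      have hzx : (↑z : V) ≠ ↑x := fun h => hz (Subtype.ext h)
      have main : reachIn (addEdge G u v) (S' \ {(↑x : V)}) ↑y ↑z := by
        by_cases hxu : (↑x : V) = u
        · have hvmem : v ∈ S' \ {(↑x : V)} :=
            ⟨hvS', fun h => huv (((h : v = ↑x).trans hxu).symm)⟩
          have hgoal : ∀ w : ↥S', (↑w : V) ≠ ↑x →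
              reachIn (addEdge G u v) (S' \ {(↑x : V)}) ↑w v := by
            intro w hwx
            by_cases hwv : (↑w : V) = v
            · rw [hwv]; exact reachIn.refl hvmem
            · have hwC : (↑w : V) ∈ C := by
                rcases w.2 with h | h | h
                · exact h
                · exact absurd (h.trans hxu.symm) hwx
                · exact absurd h hwv
              have h1 : reachIn G ({u}ᶜ) ↑w v :=
                hmc u ↑w v (fun h => hwx (h.trans hxu.symm)) (Ne.symm huv)
              rcases h1.split (T := S'ᶜ) (fun h => h w.2) with
                hleft | ⟨t, htS', htu2, b, hreachb, hadjb⟩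
              · rw [compl_diff_compl_eq S' u] at hleft
                have hleft2 : reachIn G (S' \ {(↑x : V)}) ↑w v := by rw [hxu]; exact hleft
                exact hleft2.mono_graph (fun p q _ _ h => addEdge_adj_of_adj u v h)
              · rw [compl_diff_compl_eq S' u] at hreachb
                have hbmem := hreachb.mem_right
                rcases hbmem.1 with hbC | hbu | hbv
                · exact absurd (hf1 b hbC t hadjb) htS'
                · exact absurd hbu hbmem.2
                · have hbv' : b = v := hbv
                  have hr2 : reachIn G (S' \ {(↑x : V)}) ↑w v := by
                    rw [hxu, ← hbv']; exact hreachb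
                  exact hr2.mono_graph (fun p q _ _ h => addEdge_adj_of_adj u v h)
          exact (hgoal y hyx).trans (hgoal z hzx).symm
        · have humem : u ∈ S' \ {(↑x : V)} := ⟨huS', fun h => hxu ((h : u = ↑x)).symm⟩
          have hgoal : ∀ w : ↥S', (↑w : V) ≠ ↑x →
              reachIn (addEdge G u v) (S' \ {(↑x : V)}) ↑w u := by
            intro w hwx
            by_cases hwu : (↑w : V) = u
            · rw [hwu]; exact reachIn.refl humem
            by_cases hwv : (↑w : V) = v
            · have hvmem : v ∈ S' \ {(↑x : V)} := ⟨hvS', fun h => hwx (hwv.trans h)⟩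
              rw [hwv]
              exact reachIn.single hvmem humem (Or.inr ⟨Ne.symm huv, Or.inr ⟨rfl, rfl⟩⟩)
            · have hwC : (↑w : V) ∈ C := by
                rcases w.2 with h | h | h
                · exact h
                · exact absurd h hwu
                · exact absurd h hwv
              have h1 : reachIn G ({(↑x : V)}ᶜ) ↑w u := hmc ↑x ↑w u hwx (fun h => hxu h.symm)
              rcases h1.split (T := S'ᶜ) (fun h => h w.2) with
                hleft | ⟨t, htS', htx2, b, hreachb, hadjb⟩
              · rw [compl_diff_compl_eq S' ↑x] at hleft
                exact hleft.mono_graph (fun p q _ _ h => addEdge_adj_of_adj u v h)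
              · rw [compl_diff_compl_eq S' ↑x] at hreachb
                have hbmem := hreachb.mem_right
                rcases hbmem.1 with hbC | hbu | hbv
                · exact absurd (hf1 b hbC t hadjb) htS'
                · have hbu' : b = u := hbu
                  have hr2 : reachIn G (S' \ {(↑x : V)}) ↑w u := hbu' ▸ hreachb
                  exact hr2.mono_graph (fun p q _ _ h => addEdge_adj_of_adj u v h)
                · have hbv' : b = v := hbv
                  have hr2 : reachIn G (S' \ {(↑x : V)}) ↑w v := hbv' ▸ hreachb
                  exact (hr2.mono_graph (fun p q _ _ h => addEdge_adj_of_adj u v h)).tail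
                    humem (Or.inr ⟨Ne.symm huv, Or.inr ⟨rfl, rfl⟩⟩)
          exact (hgoal y hyx).trans (hgoal z hzx).symm
      have h3' : reachIn ((addEdge G u v).induce S') ({x}ᶜ) y z := by
        rw [reachIn_induce_iff, image_val_compl_singleton]; exact main
      rwa [induce_addEdge_eq huS' hvS'] at h3'
    have hdeg1 : ∀ w' : ↥S', w' ≠ ⟨u, huS'⟩ → w' ≠ ⟨v, hvS'⟩ →
        3 ≤ (G1.neighborSet w').ncard := by
      intro w' hwu hwv
      have hwu' : (↑w' : V) ≠ u := fun h => hwu (Subtype.ext h)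
      have hwv' : (↑w' : V) ≠ v := fun h => hwv (Subtype.ext h)
      have hwC : (↑w' : V) ∈ C := by
        rcases w'.2 with h | h | h
        · exact h
        · exact absurd h hwu'
        · exact absurd h hwv'
      have hnb : G.neighborSet ↑w' ⊆ S' := fun t ht => hf1 ↑w' hwC t ht
      rw [hG1def, neighborSet_addEdge hwu hwv, ncard_neighborSet_induce hnb]
      exact hdeg ↑w' hwu' hwv'
    obtain ⟨B', hconn', hdisj', hedge', hB0', hB1'⟩ :=
      IH (Nat.card ↥S') (lt_of_lt_of_le hcard_lt hn) ↥S' G1 ⟨u, huS'⟩ ⟨v, hvS'⟩ le_rfl hcard3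
        (fun h => huv (congrArg Subtype.val h)) hmc1 hdeg1
    obtain ⟨hLconn, hLdisj, hLedge, hLa, hLb⟩ :=
      lift_result huS' hvS' B' hconn' hdisj' hedge' hB0' hB1'
    exact ⟨fun i => Subtype.val '' B' i, hLconn, hLdisj, hLedge, hLa, hLb⟩


end K4ME

open K4ME in
/-- If `G` is 2-connected and every vertex other than `u` and `v` has degree at
least 3, then `G` has a `K_4 - e` minor with `u` and `v` mapped to the two
endpoints of the missing edge `e` (here the pair of branch sets `B 0`, `B 1`,
with edges of `G` required between all other pairs of branch sets). -/
theorem rooted_K4_minus_e_minor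
    {V : Type*} [Fintype V] [DecidableEq V] (G : SimpleGraph V)
    [DecidableRel G.Adj]
    (h2 : IsTwoConnected G) (u v : V) (huv : u ≠ v)
    (hdeg : ∀ w : V, w ≠ u → w ≠ v → 3 ≤ G.degree w) :
    ∃ B : Fin 4 → Set V,
      (∀ i, (G.induce (B i)).Connected) ∧
      (Pairwise fun i j => Disjoint (B i) (B j)) ∧
      (∀ i j : Fin 4, i ≠ j → ¬(i = 0 ∧ j = 1) → ¬(i = 1 ∧ j = 0) →
        ∃ x ∈ B i, ∃ y ∈ B j, G.Adj x y) ∧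
      u ∈ B 0 ∧ v ∈ B 1 := by
  obtain ⟨h3, hconn, hdel⟩ := h2
  have hmc : ∀ x y z : V, y ≠ x → z ≠ x → reachIn G ({x}ᶜ : Set V) y z := by
    intro x y z hy hz
    have hC := hdel x
    rw [induce_connected_iff] at hC
    exact hC.2 y hy z hz
  have h3' : 3 ≤ Nat.card V := by rw [Nat.card_eq_fintype_card]; exact h3
  have hdeg' : ∀ w, w ≠ u → w ≠ v → 3 ≤ (G.neighborSet w).ncard := by
    intro w h1 h2'
    have hd := hdeg w h1 h2'
    have heq : (G.neighborSet w).ncard = G.degree w := by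
      rw [Set.ncard_eq_toFinset_card']
      congr 1
    rwa [heq]
  obtain ⟨B, hBconn, hBdisj, hBedge, hB0, hB1⟩ :=
    main_internal (Nat.card V) V G u v le_rfl h3' huv hmc hdeg'
  refine ⟨B, fun i => ?_, hBdisj, hBedge, hB0, hB1⟩
  rw [induce_connected_iff]
  exact hBconn i
end

section
/- Let T be a tree with at least two vertices, with edges enumerated e_1, …, e_m. Let G = T ∘ K_4 be the graph with vertex set {v⁺, v⁻ : v ∈ V(T)} and edges v⁺v⁻ for all v ∈ V(T) together with, for each edge vw ∈ E(T), the four edges v⁺w⁺, v⁻w⁻, v⁺w⁻, v⁻w⁺. Define d by d_{v⁺v⁻} = 1, and for the i-th tree edge vw: d_{v⁺w⁺} = d_{v⁻w⁻} = 2^{−i} and d_{v⁺w⁻} = d_{v⁻w⁺} = 1 − 2^{−i}. Then d is a distance function on G: for every edge e of G and every path P in G between the endpoints of e, the total d-length of P is at least d_e. -/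
/-- `d` is a distance function on the graph `G`. -/
def IsDistFn {V : Type*} (G : SimpleGraph V) (d : V → V → ℝ) : Prop :=
  (∀ x y, d x y = d y x) ∧ (∀ x y, G.Adj x y → 0 ≤ d x y) ∧
  (∀ x y, G.Adj x y → ∀ p : G.Walk x y,
    d x y ≤ (p.darts.map fun e => d e.toProd.1 e.toProd.2).sum)

/-- The graph `T ∘ K_4` of a tree `T`: vertices `(v, +)` and `(v, -)` for each
vertex `v` of `T` (encoded as `V × Bool`), with `(v,+)(v,-)` an edge for each
`v`, and all four edges between the pairs of `v` and `w` for each tree edge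
`vw`. -/
def treeCircK4 {V : Type*} (T : SimpleGraph V) : SimpleGraph (V × Bool) :=
  SimpleGraph.fromRel fun p q => (p.1 = q.1 ∧ p.2 ≠ q.2) ∨ T.Adj p.1 q.1



open SimpleGraph Walk Finset

namespace TreeCircK4Aux

/-! ### Arithmetic lemmas about sums of powers of 1/2 -/

lemma icc_sum_eq : ∀ N : ℕ, ∑ j ∈ Finset.Icc 1 N, (2:ℝ)^(-(j:ℤ)) = 1 - (2:ℝ)^(-(N:ℤ))
  | 0 => by simp
  | (N+1) => by
    rw [Finset.sum_Icc_succ_top (by omega : 1 ≤ N + 1), icc_sum_eq N]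
    have h : ((N:ℤ)+1) = (N:ℤ) + 1 := rfl
    have h2 : (2:ℝ)^(-((N+1:ℕ):ℤ)) = (2:ℝ)^(-(N:ℤ)) * (2:ℝ)^(-1:ℤ) := by
      rw [← zpow_add₀ (by norm_num : (2:ℝ) ≠ 0)]
      push_cast
      ring_nf
    rw [h2]
    norm_num
    ring

lemma finset_sum_le (S : Finset ℕ) (h1 : ∀ j ∈ S, 1 ≤ j) :
    (∑ j ∈ S, (2:ℝ)^(-(j:ℤ))) ≤ 1 := by
  classical
  have hsub : S ⊆ Finset.Icc 1 (S.sup id) := fun j hj =>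
    Finset.mem_Icc.2 ⟨h1 j hj, Finset.le_sup (f := id) hj⟩
  calc (∑ j ∈ S, (2:ℝ)^(-(j:ℤ)))
      ≤ ∑ j ∈ Finset.Icc 1 (S.sup id), (2:ℝ)^(-(j:ℤ)) :=
        Finset.sum_le_sum_of_subset_of_nonneg hsub (fun _ _ _ => by positivity)
    _ = 1 - (2:ℝ)^(-((S.sup id : ℕ):ℤ)) := icc_sum_eq _
    _ ≤ 1 := by
        have : (0:ℝ) ≤ (2:ℝ)^(-((S.sup id : ℕ):ℤ)) := by positivity
        linarith

lemma list_sum_le (l : List ℕ) (hnd : l.Nodup) (h1 : ∀ j ∈ l, 1 ≤ j) :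
    ((l.map fun (j : ℕ) => (2:ℝ)^(-(j:ℤ))).sum) ≤ 1 := by
  classical
  rw [← List.sum_toFinset _ hnd]
  exact finset_sum_le _ (fun j hj => h1 j (List.mem_toFinset.1 hj))

lemma list_sum_le' (l : List ℕ) (hnd : l.Nodup) (h1 : ∀ j ∈ l, 1 ≤ j)
    (k : ℕ) (hk : 1 ≤ k) (hkl : k ∉ l) :
    ((l.map fun (j : ℕ) => (2:ℝ)^(-(j:ℤ))).sum) ≤ 1 - (2:ℝ)^(-(k:ℤ)) := by
  have := list_sum_le (k :: l) (List.nodup_cons.2 ⟨hkl, hnd⟩)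
    (by intro j hj
        rcases List.mem_cons.1 hj with rfl | hj
        · exact hk
        · exact h1 j hj)
  simp only [List.map_cons, List.sum_cons] at this
  linarith

/-! ### Unique paths in trees -/

variable {V : Type*} [DecidableEq V] {T : SimpleGraph V}

noncomputable def thePath (hT : T.IsTree) (v u : V) : T.Walk v u :=
  (hT.existsUnique_path v u).choose

lemma thePath_isPath (hT : T.IsTree) (v u : V) : (thePath hT v u).IsPath :=
  (hT.existsUnique_path v u).choose_spec.1

lemma thePath_unique (hT : T.IsTree) {v u : V} (p : T.Walk v u) (hp : p.IsPath) :
    p = thePath hT v u :=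
  (hT.existsUnique_path v u).choose_spec.2 p hp

lemma concat_isPath {u v w : V} {p : T.Walk u v} (hp : p.IsPath) (h : T.Adj v w)
    (hw : w ∉ p.support) : (p.concat h).IsPath := by
  rw [← Walk.isPath_reverse_iff, Walk.reverse_concat]
  exact hp.reverse.cons (by simpa using hw)

lemma thePath_self (hT : T.IsTree) (v : V) : thePath hT v v = Walk.nil :=
  (thePath_unique hT Walk.nil Walk.IsPath.nil).symm

lemma thePath_adj (hT : T.IsTree) {v w : V} (h : T.Adj v w) :
    thePath hT v w = Walk.cons h Walk.nil :=
  (thePath_unique hT _ (by simp [Walk.cons_isPath_iff, h.ne])).symm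

lemma path_concat (hT : T.IsTree) (v : V) {x y : V} (hxy : T.Adj x y) :
    thePath hT v y = (thePath hT v x).concat hxy ∨
    thePath hT v x = (thePath hT v y).concat hxy.symm := by
  by_cases hy : y ∈ (thePath hT v x).support
  · right
    have hsingle : (Walk.cons hxy.symm Walk.nil : T.Walk y x).IsPath := by
      simp [Walk.cons_isPath_iff, (hxy.symm.ne : y ≠ x)]
    have h1 : (thePath hT v x).dropUntil y hy = Walk.cons hxy.symm Walk.nil :=
      ((thePath_unique hT _ ((thePath_isPath hT v x).dropUntil hy)).trans
        (thePath_unique hT _ hsingle).symm)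
    have h2 : (thePath hT v x).takeUntil y hy = thePath hT v y :=
      thePath_unique hT _ ((thePath_isPath hT v x).takeUntil hy)
    calc thePath hT v x
        = ((thePath hT v x).takeUntil y hy).append ((thePath hT v x).dropUntil y hy) :=
          (Walk.take_spec _ hy).symm
      _ = (thePath hT v y).append (Walk.cons hxy.symm Walk.nil) := by rw [h1, h2]
      _ = (thePath hT v y).concat hxy.symm := (Walk.concat_eq_append _ _).symm
  · left
    exact (thePath_unique hT _ (concat_isPath (thePath_isPath hT v x) hxy hy)).symm

end TreeCircK4Aux

namespace TreeCircK4Aux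

set_option linter.unusedSectionVars false

variable {V : Type*} [DecidableEq V] {T : SimpleGraph V}

section
variable (idx : V → V → ℕ)

/-- Sum of weights `2^{-idx}` along the unique path from `v` to `u`. -/
noncomputable def gfun (hT : T.IsTree) (v u : V) : ℝ :=
  ((thePath hT v u).darts.map
    fun d => (2:ℝ)^(-(idx d.toProd.1 d.toProd.2 : ℤ))).sum

lemma idxList_eq (hsym : ∀ v w, idx v w = idx w v) {v u : V} (p : T.Walk v u) :
    (p.darts.map fun d => idx d.toProd.1 d.toProd.2)
      = p.edges.map (Sym2.lift ⟨idx, hsym⟩) := by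
  rw [Walk.edges, List.map_map]
  refine List.map_congr_left ?_
  rintro ⟨⟨x, y⟩, hxy⟩ _
  simp [SimpleGraph.Dart.edge]

lemma idxList_nodup (hsym : ∀ v w, idx v w = idx w v)
    (hinj : ∀ v w x y, T.Adj v w → T.Adj x y → idx v w = idx x y → s(v, w) = s(x, y))
    {v u : V} {p : T.Walk v u} (hp : p.IsPath) :
    (p.darts.map fun d => idx d.toProd.1 d.toProd.2).Nodup := by
  rw [idxList_eq idx hsym]
  refine List.Nodup.map_on ?_ hp.isTrail.edges_nodup
  intro e1 he1 e2 he2 he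
  induction e1 using Sym2.inductionOn with | hf a b =>
  induction e2 using Sym2.inductionOn with | hf c d =>
  simp only [Sym2.lift_mk] at he
  exact hinj _ _ _ _ (p.adj_of_mem_edges he1) (p.adj_of_mem_edges he2) he

lemma idxList_ge (h1 : ∀ v w, T.Adj v w → 1 ≤ idx v w) {v u : V} (p : T.Walk v u) :
    ∀ j ∈ (p.darts.map fun d => idx d.toProd.1 d.toProd.2), 1 ≤ j := by
  intro j hj
  obtain ⟨d, _, rfl⟩ := List.mem_map.1 hj
  exact h1 _ _ d.adj

lemma wsum_eq {v u : V} (p : T.Walk v u) :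
    (p.darts.map fun d => (2:ℝ)^(-(idx d.toProd.1 d.toProd.2 : ℤ))).sum
      = ((p.darts.map fun d => idx d.toProd.1 d.toProd.2).map
          fun (j : ℕ) => (2:ℝ)^(-(j:ℤ))).sum := by
  rw [List.map_map]
  rfl

lemma gfun_nonneg (hT : T.IsTree) (v u : V) : 0 ≤ gfun idx hT v u := by
  apply List.sum_nonneg
  intro a ha
  obtain ⟨d, _, rfl⟩ := List.mem_map.1 ha
  positivity

lemma gfun_le_one (hsym : ∀ v w, idx v w = idx w v)
    (hinj : ∀ v w x y, T.Adj v w → T.Adj x y → idx v w = idx x y → s(v, w) = s(x, y))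
    (h1 : ∀ v w, T.Adj v w → 1 ≤ idx v w)
    (hT : T.IsTree) (v u : V) : gfun idx hT v u ≤ 1 := by
  unfold gfun
  rw [wsum_eq]
  exact list_sum_le _ (idxList_nodup idx hsym hinj (thePath_isPath hT v u))
    (idxList_ge idx h1 _)

lemma gfun_self (hT : T.IsTree) (v : V) : gfun idx hT v v = 0 := by
  unfold gfun
  rw [thePath_self]
  simp

lemma gfun_adj_root (hT : T.IsTree) {v w : V} (h : T.Adj v w) :
    gfun idx hT v w = (2:ℝ)^(-(idx v w : ℤ)) := by
  unfold gfun
  rw [thePath_adj hT h]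
  simp

lemma gfun_adj (hsym : ∀ v w, idx v w = idx w v)
    (hinj : ∀ v w x y, T.Adj v w → T.Adj x y → idx v w = idx x y → s(v, w) = s(x, y))
    (h1 : ∀ v w, T.Adj v w → 1 ≤ idx v w)
    (hT : T.IsTree) (v : V) {x y : V} (hxy : T.Adj x y) :
    (gfun idx hT v y = gfun idx hT v x + (2:ℝ)^(-(idx x y : ℤ)) ∧
      gfun idx hT v x ≤ 1 - (2:ℝ)^(-(idx x y : ℤ))) ∨
    (gfun idx hT v x = gfun idx hT v y + (2:ℝ)^(-(idx x y : ℤ)) ∧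
      gfun idx hT v y ≤ 1 - (2:ℝ)^(-(idx x y : ℤ))) := by
  have key : ∀ (a b : V) (hab : T.Adj a b),
      thePath hT v b = (thePath hT v a).concat hab →
      gfun idx hT v b = gfun idx hT v a + (2:ℝ)^(-(idx a b : ℤ)) ∧
        gfun idx hT v a ≤ 1 - (2:ℝ)^(-(idx a b : ℤ)) := by
    intro a b hab hconcat
    have hd : (thePath hT v b).darts
        = (thePath hT v a).darts ++ [⟨(a, b), hab⟩] := by
      rw [hconcat, Walk.darts_concat, List.concat_eq_append]
    have hil : ((thePath hT v b).darts.map fun d => idx d.toProd.1 d.toProd.2)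
        = ((thePath hT v a).darts.map fun d => idx d.toProd.1 d.toProd.2)
          ++ [idx a b] := by
      rw [hd, List.map_append]
      rfl
    have hnd : (((thePath hT v a).darts.map fun d => idx d.toProd.1 d.toProd.2)
        ++ [idx a b]).Nodup := by
      rw [← hil]
      exact idxList_nodup idx hsym hinj (thePath_isPath hT v b)
    have hndl := (List.nodup_append.1 hnd).1
    have hkl : idx a b ∉
        ((thePath hT v a).darts.map fun d => idx d.toProd.1 d.toProd.2) := by
      intro hmem
      exact (List.nodup_append.1 hnd).2.2 _ hmem _ (List.mem_singleton_self _) rfl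
    constructor
    · unfold gfun
      rw [hd]
      simp
    · unfold gfun
      rw [wsum_eq]
      exact list_sum_le' _ hndl (idxList_ge idx h1 _) _ (h1 _ _ hab) hkl
  rcases path_concat hT v hxy with h | h
  · exact Or.inl (key x y hxy h)
  · right
    have := key y x hxy.symm h
    rwa [hsym y x] at this

end

/-- Telescoping: a function that is `d`-Lipschitz along edges lower-bounds
walk sums. -/
lemma walk_telescope {W : Type*} {G : SimpleGraph W} (d : W → W → ℝ) (f : W → ℝ)
    (hf : ∀ a b, G.Adj a b → |f a - f b| ≤ d a b) {x y : W} (p : G.Walk x y) :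
    |f x - f y| ≤ (p.darts.map fun e => d e.toProd.1 e.toProd.2).sum := by
  induction p with
  | nil => simp
  | @cons a b c h q ih =>
    simp only [Walk.darts_cons, List.map_cons, List.sum_cons]
    calc |f a - f c| ≤ |f a - f b| + |f b - f c| := abs_sub_le _ _ _
      _ ≤ _ := add_le_add (hf _ _ h) ih

end TreeCircK4Aux


open TreeCircK4Aux in
/-- Given an enumeration of the tree edges by indices `idx ≥ 1` (distinct on
distinct edges), the weights `d_{v⁺v⁻} = 1`, `d_{v⁺w⁺} = d_{v⁻w⁻} = 2^{-i}`,
`d_{v⁺w⁻} = d_{v⁻w⁺} = 1 - 2^{-i}` (where `i = idx v w`) form a distance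
function on `T ∘ K_4`: for every edge `e` and every walk `P` between its
endpoints, the total `d`-length of `P` is at least `d_e`. -/
theorem treeCircK4_distance_function
    {V : Type*} [Fintype V] [DecidableEq V] (T : SimpleGraph V)
    (hTconn : T.Connected) (hTacyclic : T.IsAcyclic)
    (hcard : 2 ≤ Fintype.card V)
    (idx : V → V → ℕ)
    (hidxsym : ∀ v w, idx v w = idx w v)
    (hidx1 : ∀ v w, T.Adj v w → 1 ≤ idx v w)
    (hidxinj : ∀ v w x y, T.Adj v w → T.Adj x y → idx v w = idx x y →
      s(v, w) = s(x, y)) :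
    IsDistFn (treeCircK4 T)
      (fun p q : V × Bool =>
        if p.1 = q.1 then 1
        else if p.2 = q.2 then (2 : ℝ) ^ (-(idx p.1 q.1 : ℤ))
        else 1 - (2 : ℝ) ^ (-(idx p.1 q.1 : ℤ))) := by
  classical
  have hT : T.IsTree := ⟨hTconn, hTacyclic⟩
  have hadj_cases : ∀ a b : V × Bool, (treeCircK4 T).Adj a b →
      (a.1 = b.1 ∧ a.2 ≠ b.2) ∨ T.Adj a.1 b.1 := by
    intro a b h
    rw [treeCircK4, SimpleGraph.fromRel_adj] at h
    rcases h.2 with (⟨h1, h2⟩ | h3) | (⟨h1, h2⟩ | h3)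
    · exact Or.inl ⟨h1, h2⟩
    · exact Or.inr h3
    · exact Or.inl ⟨h1.symm, Ne.symm h2⟩
    · exact Or.inr h3.symm
  refine ⟨?_, ?_, ?_⟩
  · -- symmetry
    intro x y
    simp only
    by_cases h1 : x.1 = y.1
    · rw [if_pos h1, if_pos h1.symm]
    · rw [if_neg h1, if_neg (Ne.symm h1), hidxsym x.1 y.1]
      by_cases h2 : x.2 = y.2
      · rw [if_pos h2, if_pos h2.symm]
      · rw [if_neg h2, if_neg (Ne.symm h2)]
  · -- nonnegativity
    intro x y h
    simp only
    by_cases h1 : x.1 = y.1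
    · rw [if_pos h1]; norm_num
    · have hT2 : T.Adj x.1 y.1 := by
        rcases hadj_cases x y h with ⟨he, _⟩ | ht2
        · exact absurd he h1
        · exact ht2
      have hle : (2:ℝ)^(-(idx x.1 y.1 : ℤ)) ≤ 1 :=
        zpow_le_one_of_nonpos₀ one_le_two
          (neg_nonpos.2 (by exact_mod_cast Nat.zero_le _))
      rw [if_neg h1]
      by_cases h2 : x.2 = y.2
      · rw [if_pos h2]; positivity
      · rw [if_neg h2]; linarith
  · -- main inequality
    intro x y h p
    simp only
    set F : V × Bool → ℝ := fun a =>
      if a.2 then gfun idx hT x.1 a.1 else 1 - gfun idx hT x.1 a.1 with hF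
    have hLip : ∀ a b : V × Bool, (treeCircK4 T).Adj a b →
        |F a - F b| ≤ (if a.1 = b.1 then (1:ℝ)
          else if a.2 = b.2 then (2:ℝ)^(-(idx a.1 b.1 : ℤ))
          else 1 - (2:ℝ)^(-(idx a.1 b.1 : ℤ))) := by
      intro a b hab
      have hFa : F a = if a.2 then gfun idx hT x.1 a.1 else 1 - gfun idx hT x.1 a.1 := rfl
      have hFb : F b = if b.2 then gfun idx hT x.1 b.1 else 1 - gfun idx hT x.1 b.1 := rfl
      have hg0a : 0 ≤ gfun idx hT x.1 a.1 := gfun_nonneg idx hT x.1 a.1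
      have hg0b : 0 ≤ gfun idx hT x.1 b.1 := gfun_nonneg idx hT x.1 b.1
      rcases hadj_cases a b hab with ⟨h1, h2⟩ | hTab
      · rw [if_pos h1]
        have hg1 : gfun idx hT x.1 a.1 ≤ 1 :=
          gfun_le_one idx hidxsym hidxinj hidx1 hT x.1 a.1
        have hb : gfun idx hT x.1 b.1 = gfun idx hT x.1 a.1 := by rw [← h1]
        rw [hFa, hFb, hb]
        cases ha2 : a.2 <;> cases hb2 : b.2
        · exact absurd (ha2.trans hb2.symm) h2
        · rw [if_neg (by simp), if_pos rfl, abs_le]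
          constructor <;> linarith
        · rw [if_pos rfl, if_neg (by simp), abs_le]
          constructor <;> linarith
        · exact absurd (ha2.trans hb2.symm) h2
      · have hne : a.1 ≠ b.1 := hTab.ne
        rw [if_neg hne, hFa, hFb]
        have ht0 : (0:ℝ) < (2:ℝ)^(-(idx a.1 b.1 : ℤ)) := by positivity
        rcases gfun_adj idx hidxsym hidxinj hidx1 hT x.1 hTab with
          ⟨hrel, hbd⟩ | ⟨hrel, hbd⟩ <;>
          cases ha2 : a.2 <;> cases hb2 : b.2 <;>
          simp only [Bool.false_eq_true, Bool.true_eq_false, reduceIte,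
            if_true, if_false] <;>
          rw [abs_le] <;> constructor <;> linarith
    have hstar : (if x.1 = y.1 then (1:ℝ)
        else if x.2 = y.2 then (2:ℝ)^(-(idx x.1 y.1 : ℤ))
        else 1 - (2:ℝ)^(-(idx x.1 y.1 : ℤ))) ≤ |F x - F y| := by
      have hg_self : gfun idx hT x.1 x.1 = 0 := gfun_self idx hT x.1
      have hFx : F x = if x.2 then (0:ℝ) else 1 := by
        rw [hF]
        simp only [hg_self]
        norm_num
      rcases hadj_cases x y h with ⟨h1, h2⟩ | hTxy
      · rw [if_pos h1]
        have hgy : gfun idx hT x.1 y.1 = 0 := by rw [← h1]; exact hg_self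
        have hFy : F y = if y.2 then (0:ℝ) else 1 := by
          rw [hF]
          simp only [hgy]
          norm_num
        rw [hFx, hFy]
        cases hx2 : x.2 <;> cases hy2 : y.2
        · exact absurd (hx2.trans hy2.symm) h2
        · rw [if_neg (by simp), if_pos rfl]
          refine le_abs.2 (Or.inl (by norm_num))
        · rw [if_pos rfl, if_neg (by simp)]
          refine le_abs.2 (Or.inr (by norm_num))
        · exact absurd (hx2.trans hy2.symm) h2
      · rw [if_neg hTxy.ne]
        have hgy : gfun idx hT x.1 y.1 = (2:ℝ)^(-(idx x.1 y.1 : ℤ)) :=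
          gfun_adj_root idx hT hTxy
        have hFy : F y = if y.2 then (2:ℝ)^(-(idx x.1 y.1 : ℤ))
            else 1 - (2:ℝ)^(-(idx x.1 y.1 : ℤ)) := by
          rw [hF]
          simp only [hgy]
        rw [hFx, hFy]
        cases hx2 : x.2 <;> cases hy2 : y.2 <;>
          simp only [Bool.false_eq_true, Bool.true_eq_false, reduceIte,
            if_true, if_false] <;>
          refine le_abs.2 ?_
        · exact Or.inl (by linarith)
        · exact Or.inl (by linarith)
        · exact Or.inr (by linarith)
        · exact Or.inr (by linarith)
    calc (if x.1 = y.1 then (1:ℝ)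
          else if x.2 = y.2 then (2:ℝ)^(-(idx x.1 y.1 : ℤ))
          else 1 - (2:ℝ)^(-(idx x.1 y.1 : ℤ)))
        ≤ |F x - F y| := hstar
      _ ≤ _ := walk_telescope _ F hLip p
end
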